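/- arXiv:1312.3013 — 7 statements merged into one kernel-verified Lean document; each statement's English description precedes it below -/
import Mathlib

section
/- Let f : ℝ^n → ℝ be concave and differentiable, and let L be a symmetric positive semidefinite n×n matrix. Then f(x₁) ≥ f(x₂) + ⟨∇f(x₂), x₁ - x₂⟩ - (1/2)‖x₁ - x₂‖²_L holds for all x₁, x₂ if and only if ⟨∇f(x₁) - ∇f(x₂), x₂ - x₁⟩ ≤ ‖x₁ - x₂‖²_L holds for all x₁, x₂. -/
open Matrix

/-- The continuous linear map `w ↦ v ⬝ᵥ w`, used to represent a gradient. -/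
noncomputable def dotCLM {n : ℕ} (v : Fin n → ℝ) : (Fin n → ℝ) →L[ℝ] ℝ :=
  ∑ i, v i • ContinuousLinearMap.proj (R := ℝ) (φ := fun _ : Fin n => ℝ) i

lemma dotCLM_apply {n : ℕ} (v w : Fin n → ℝ) : dotCLM v w = v ⬝ᵥ w := by
  simp [dotCLM, dotProduct, ContinuousLinearMap.sum_apply]

/-- Corollary 3: for concave differentiable `f`, the quadratic lower bound with matrix `L`
holds iff the corresponding monotonicity-type inequality holds. -/
theorem quad_lower_bound_iff_concave {n : ℕ} (f : (Fin n → ℝ) → ℝ)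
    (f' : (Fin n → ℝ) → (Fin n → ℝ))
    (hconc : ConcaveOn ℝ Set.univ f)
    (hdiff : ∀ x, HasFDerivAt f (dotCLM (f' x)) x)
    (L : Matrix (Fin n) (Fin n) ℝ) (hL : L.PosSemidef) :
    (∀ x₁ x₂, f x₁ ≥ f x₂ + f' x₂ ⬝ᵥ (x₁ - x₂)
        - (1 / 2) * ((x₁ - x₂) ⬝ᵥ L.mulVec (x₁ - x₂)))
      ↔ (∀ x₁ x₂, (f' x₁ - f' x₂) ⬝ᵥ (x₂ - x₁) ≤ (x₁ - x₂) ⬝ᵥ L.mulVec (x₁ - x₂)) := by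
  constructor
  · intro H x₁ x₂
    have h1 := H x₁ x₂
    have h2 := H x₂ x₁
    have hq : (x₂ - x₁) ⬝ᵥ L.mulVec (x₂ - x₁) = (x₁ - x₂) ⬝ᵥ L.mulVec (x₁ - x₂) := by
      rw [show x₂ - x₁ = -(x₁ - x₂) by ring, neg_dotProduct, Matrix.mulVec_neg,
        dotProduct_neg, neg_neg]
    have e : ∀ v : Fin n → ℝ, v ⬝ᵥ (x₂ - x₁) = -(v ⬝ᵥ (x₁ - x₂)) := by
      intro v
      rw [show x₂ - x₁ = -(x₁ - x₂) by ring]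
      simp [dotProduct_neg]
    rw [sub_dotProduct, e (f' x₁), e (f' x₂)]
    rw [hq, e (f' x₁)] at h2
    linarith
  · intro H x₁ x₂
    set d := x₁ - x₂ with hd
    set Q := d ⬝ᵥ L.mulVec d with hQ
    set h : ℝ → ℝ := fun t => f (x₂ + t • d) - t * (f' x₂ ⬝ᵥ d) + t ^ 2 * (Q / 2) with hh
    have hderiv : ∀ t : ℝ, HasDerivAt h
        (f' (x₂ + t • d) ⬝ᵥ d - f' x₂ ⬝ᵥ d + t * Q) t := by
      intro t
      have hc : HasDerivAt (fun t : ℝ => x₂ + t • d) d t := by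
        simpa using ((hasDerivAt_id t).smul_const d).const_add x₂
      have h1 : HasDerivAt (fun t : ℝ => f (x₂ + t • d)) (f' (x₂ + t • d) ⬝ᵥ d) t := by
        have := (hdiff (x₂ + t • d)).comp_hasDerivAt t hc
        rw [dotCLM_apply] at this
        exact this
      have h2 : HasDerivAt (fun t : ℝ => t * (f' x₂ ⬝ᵥ d)) (f' x₂ ⬝ᵥ d) t :=
        hasDerivAt_mul_const _
      have h3 : HasDerivAt (fun t : ℝ => t ^ 2 * (Q / 2)) (t * Q) t := by
        have := (hasDerivAt_pow 2 t).mul_const (Q / 2)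
        rw [show t * Q = ((2:ℕ):ℝ) * t ^ (2 - 1) * (Q / 2) by push_cast; ring]
        exact this
      exact (h1.sub h2).add h3
    have hmono : MonotoneOn h (Set.Icc (0:ℝ) 1) := by
      apply monotoneOn_of_deriv_nonneg (convex_Icc 0 1)
      · exact (fun t _ => ((hderiv t).differentiableAt).continuousAt.continuousWithinAt)
      · exact fun t _ => ((hderiv t).differentiableAt).differentiableWithinAt
      · intro t ht
        rw [interior_Icc] at ht
        rw [(hderiv t).deriv]
        have key := H (x₂ + t • d) x₂
        have e1 : x₂ - (x₂ + t • d) = -(t • d) := by ring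
        have e2 : (x₂ + t • d) - x₂ = t • d := by ring
        rw [e1, e2] at key
        simp only [sub_dotProduct, dotProduct_neg, dotProduct_smul,
          smul_dotProduct, Matrix.mulVec_smul, smul_eq_mul] at key
        have htp : (0:ℝ) < t := ht.1
        nlinarith [key, htp]
    have h01 : h 0 ≤ h 1 := hmono (Set.left_mem_Icc.2 zero_le_one) (Set.right_mem_Icc.2 zero_le_one) zero_le_one
    have hx : x₂ + (1:ℝ) • d = x₁ := by
      rw [one_smul, hd]; abel
    have h0 : h 0 = f x₂ := by simp [hh]
    have h1v : h 1 = f x₁ - f' x₂ ⬝ᵥ d + Q / 2 := by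
      simp only [hh]
      rw [hx]; ring
    rw [h0, h1v] at h01
    simp only [ge_iff_le]
    linarith
end

section
/- Let f : ℝ^n → ℝ be differentiable and strongly convex with matrix H (i.e., f(x) - (1/2)xᵀHx is convex), let h : ℝ^n → ℝ ∪ {∞} be proper, closed, and convex, and let C ∈ ℝ^{(m+p)×n}. For ν ∈ ℝ^{m+p} define x*(ν) = argmin_x { f(x) + h(x) + νᵀCx } (assumed to exist). Then for all ν₁, ν₂: ‖x*(ν₁) - x*(ν₂)‖_H ≤ ‖ν₁ - ν₂‖_{C H⁻¹ Cᵀ}. -/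
open Matrix

lemma quad_nonneg {n : ℕ} {H : Matrix (Fin n) (Fin n) ℝ} (hH : H.PosDef) (x : Fin n → ℝ) :
    0 ≤ x ⬝ᵥ H.mulVec x := by
  rcases eq_or_ne x 0 with h | h
  · simp [h]
  · simpa using (hH.dotProduct_mulVec_pos h).le

lemma cs_aux {n : ℕ} {H : Matrix (Fin n) (Fin n) ℝ} (hH : H.PosDef) (a d : Fin n → ℝ) :
    (a ⬝ᵥ H.mulVec d) ^ 2 ≤ (a ⬝ᵥ H.mulVec a) * (d ⬝ᵥ H.mulVec d) := by
  have hsym : d ⬝ᵥ H.mulVec a = a ⬝ᵥ H.mulVec d := by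
    rw [dotProduct_mulVec, ← mulVec_transpose]
    rw [show Hᵀ = H from Matrix.IsSymm.eq (by simpa using hH.isHermitian), dotProduct_comm]
  have key : ∀ t : ℝ, 0 ≤ (d ⬝ᵥ H.mulVec d) * (t * t) + (2 * (a ⬝ᵥ H.mulVec d)) * t
      + a ⬝ᵥ H.mulVec a := by
    intro t
    have h0 : 0 ≤ (a + t • d) ⬝ᵥ H.mulVec (a + t • d) := quad_nonneg hH _
    have expand : (a + t • d) ⬝ᵥ H.mulVec (a + t • d)
        = (d ⬝ᵥ H.mulVec d) * (t * t) + (2 * (a ⬝ᵥ H.mulVec d)) * t + a ⬝ᵥ H.mulVec a := by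
      simp only [Matrix.mulVec_add, Matrix.mulVec_smul, dotProduct_add, add_dotProduct,
        dotProduct_smul, smul_dotProduct, smul_eq_mul, hsym]
      ring
    linarith [expand ▸ h0]
  have hd := discrim_le_zero key
  rw [discrim] at hd
  nlinarith [hd]

/-- Lemma 7: for `f` differentiable and strongly convex with matrix `H` (i.e.
`f - (1/2)xᵀHx` is convex), `h` proper closed convex, and
`x*(ν) = argmin_x { f(x) + h(x) + νᵀCx }`, one has
`‖x*(ν₁) - x*(ν₂)‖_H ≤ ‖ν₁ - ν₂‖_{CH⁻¹Cᵀ}`. -/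
theorem minimizer_H_norm_bound {n m p : ℕ} (f : (Fin n → ℝ) → ℝ)
    (f' : (Fin n → ℝ) → (Fin n → ℝ))
    (H : Matrix (Fin n) (Fin n) ℝ) (hH : H.PosDef)
    (hdiff : ∀ x, HasFDerivAt f (dotCLM (f' x)) x)
    (hstrong : ConvexOn ℝ Set.univ (fun x => f x - (1 / 2) * (x ⬝ᵥ H.mulVec x)))
    (h : (Fin n → ℝ) → EReal)
    (hproper_bot : ∀ x, h x ≠ ⊥) (hproper_top : ∃ x, h x ≠ ⊤)
    (hclosed : LowerSemicontinuous h)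
    (hhconv : ∀ (x y : Fin n → ℝ) (θ : ℝ), 0 ≤ θ → θ ≤ 1 →
      h (θ • x + (1 - θ) • y) ≤ (θ : EReal) * h x + ((1 - θ : ℝ) : EReal) * h y)
    (C : Matrix (Fin (m + p)) (Fin n) ℝ)
    (xs : (Fin (m + p) → ℝ) → (Fin n → ℝ))
    (hxs : ∀ ν x, ((f (xs ν) + ν ⬝ᵥ C.mulVec (xs ν) : ℝ) : EReal) + h (xs ν)
        ≤ ((f x + ν ⬝ᵥ C.mulVec x : ℝ) : EReal) + h x)
    (ν₁ ν₂ : Fin (m + p) → ℝ) :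
    Real.sqrt ((xs ν₁ - xs ν₂) ⬝ᵥ H.mulVec (xs ν₁ - xs ν₂))
      ≤ Real.sqrt ((ν₁ - ν₂) ⬝ᵥ (C * H⁻¹ * Cᵀ).mulVec (ν₁ - ν₂)) := by
  obtain ⟨x₀, hx₀⟩ := hproper_top
  -- finiteness of h at minimizers
  have hfin : ∀ ν, ∃ r : ℝ, h (xs ν) = (r : EReal) := by
    intro ν
    have hne_top : h (xs ν) ≠ ⊤ := by
      intro hcon
      have h1 := hxs ν x₀
      rw [hcon, EReal.coe_add_top, top_le_iff] at h1
      exact absurd h1 (EReal.add_lt_top (EReal.coe_ne_top _) hx₀).ne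
    exact ⟨(h (xs ν)).toReal, (EReal.coe_toReal hne_top (hproper_bot _)).symm⟩
  obtain ⟨a, ha⟩ := hfin ν₁
  obtain ⟨b, hb⟩ := hfin ν₂
  set d := xs ν₁ - xs ν₂ with hd
  have hHsym : Hᵀ = H := Matrix.IsSymm.eq (by simpa using hH.isHermitian)
  have hinv : H * H⁻¹ = 1 := Matrix.mul_nonsing_inv _ hH.det_pos.ne'.isUnit
  -- key inequality for θ ∈ (0,1)
  have hkey : ∀ θ : ℝ, θ ∈ Set.Ioo (0:ℝ) 1 →
      (1 - θ) * (d ⬝ᵥ H.mulVec d) ≤ (ν₂ - ν₁) ⬝ᵥ C.mulVec d := by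
    rintro θ ⟨hθ0, hθ1⟩
    have hθ0' : (0:ℝ) ≤ θ := hθ0.le
    have hθ1' : (0:ℝ) ≤ 1 - θ := by linarith
    -- real version of the two optimality inequalities
    have t1 := hxs ν₁ (θ • xs ν₂ + (1 - θ) • xs ν₁)
    rw [ha] at t1
    have t2 := hhconv (xs ν₂) (xs ν₁) θ hθ0' hθ1.le
    rw [ha, hb, ← EReal.coe_mul, ← EReal.coe_mul, ← EReal.coe_add] at t2
    have t3 := t1.trans (add_le_add_right t2 _)
    rw [← EReal.coe_add, ← EReal.coe_add] at t3
    have r1 := EReal.coe_le_coe_iff.mp t3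
    have s1' := hxs ν₂ (θ • xs ν₁ + (1 - θ) • xs ν₂)
    rw [hb] at s1'
    have s2' := hhconv (xs ν₁) (xs ν₂) θ hθ0' hθ1.le
    rw [ha, hb, ← EReal.coe_mul, ← EReal.coe_mul, ← EReal.coe_add] at s2'
    have s3' := s1'.trans (add_le_add_right s2' _)
    rw [← EReal.coe_add, ← EReal.coe_add] at s3'
    have r2 := EReal.coe_le_coe_iff.mp s3'
    -- strong convexity
    have c1 := hstrong.2 (Set.mem_univ (xs ν₂)) (Set.mem_univ (xs ν₁)) hθ0' hθ1'
      (by ring)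
    have c2 := hstrong.2 (Set.mem_univ (xs ν₁)) (Set.mem_univ (xs ν₂)) hθ0' hθ1'
      (by ring)
    simp only [smul_eq_mul] at c1 c2
    -- bilinear expansions
    have ez1 : (θ • xs ν₂ + (1 - θ) • xs ν₁) ⬝ᵥ H.mulVec (θ • xs ν₂ + (1 - θ) • xs ν₁)
        = θ*θ*(xs ν₂ ⬝ᵥ H.mulVec (xs ν₂)) + θ*(1-θ)*(xs ν₂ ⬝ᵥ H.mulVec (xs ν₁))
          + θ*(1-θ)*(xs ν₁ ⬝ᵥ H.mulVec (xs ν₂)) + (1-θ)*(1-θ)*(xs ν₁ ⬝ᵥ H.mulVec (xs ν₁)) := by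
      simp only [Matrix.mulVec_add, Matrix.mulVec_smul, dotProduct_add, add_dotProduct,
        dotProduct_smul, smul_dotProduct, smul_eq_mul]
      ring
    have ez2 : (θ • xs ν₁ + (1 - θ) • xs ν₂) ⬝ᵥ H.mulVec (θ • xs ν₁ + (1 - θ) • xs ν₂)
        = θ*θ*(xs ν₁ ⬝ᵥ H.mulVec (xs ν₁)) + θ*(1-θ)*(xs ν₁ ⬝ᵥ H.mulVec (xs ν₂))
          + θ*(1-θ)*(xs ν₂ ⬝ᵥ H.mulVec (xs ν₁)) + (1-θ)*(1-θ)*(xs ν₂ ⬝ᵥ H.mulVec (xs ν₂)) := by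
      simp only [Matrix.mulVec_add, Matrix.mulVec_smul, dotProduct_add, add_dotProduct,
        dotProduct_smul, smul_dotProduct, smul_eq_mul]
      ring
    have ed : d ⬝ᵥ H.mulVec d
        = xs ν₁ ⬝ᵥ H.mulVec (xs ν₁) - xs ν₁ ⬝ᵥ H.mulVec (xs ν₂)
          - xs ν₂ ⬝ᵥ H.mulVec (xs ν₁) + xs ν₂ ⬝ᵥ H.mulVec (xs ν₂) := by
      simp only [hd, Matrix.mulVec_sub, dotProduct_sub, sub_dotProduct]
      ring
    have ec1 : ν₁ ⬝ᵥ C.mulVec (θ • xs ν₂ + (1 - θ) • xs ν₁)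
        = θ*(ν₁ ⬝ᵥ C.mulVec (xs ν₂)) + (1-θ)*(ν₁ ⬝ᵥ C.mulVec (xs ν₁)) := by
      simp only [Matrix.mulVec_add, Matrix.mulVec_smul, dotProduct_add, dotProduct_smul,
        smul_eq_mul]
    have ec2 : ν₂ ⬝ᵥ C.mulVec (θ • xs ν₁ + (1 - θ) • xs ν₂)
        = θ*(ν₂ ⬝ᵥ C.mulVec (xs ν₁)) + (1-θ)*(ν₂ ⬝ᵥ C.mulVec (xs ν₂)) := by
      simp only [Matrix.mulVec_add, Matrix.mulVec_smul, dotProduct_add, dotProduct_smul,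
        smul_eq_mul]
    have ecd : (ν₂ - ν₁) ⬝ᵥ C.mulVec d
        = ν₂ ⬝ᵥ C.mulVec (xs ν₁) - ν₂ ⬝ᵥ C.mulVec (xs ν₂)
          - ν₁ ⬝ᵥ C.mulVec (xs ν₁) + ν₁ ⬝ᵥ C.mulVec (xs ν₂) := by
      simp only [hd, Matrix.mulVec_sub, dotProduct_sub, sub_dotProduct]
      ring
    rw [ec1] at r1
    rw [ec2] at r2
    rw [ez1] at c1
    rw [ez2] at c2
    have final : θ * ((1 - θ) * (d ⬝ᵥ H.mulVec d)) ≤ θ * ((ν₂ - ν₁) ⬝ᵥ C.mulVec d) := by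
      rw [ed, ecd]
      nlinarith [r1, r2, c1, c2]
    exact le_of_mul_le_mul_left final hθ0
  -- limit θ → 0⁺
  have hQK : d ⬝ᵥ H.mulVec d ≤ (ν₂ - ν₁) ⬝ᵥ C.mulVec d := by
    have ht : Filter.Tendsto (fun θ : ℝ => (1 - θ) * (d ⬝ᵥ H.mulVec d))
        (nhdsWithin 0 (Set.Ioi 0)) (nhds (d ⬝ᵥ H.mulVec d)) := by
      have hc : Continuous fun θ : ℝ => (1 - θ) * (d ⬝ᵥ H.mulVec d) := by continuity
      simpa using (hc.tendsto 0).mono_left nhdsWithin_le_nhds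
    refine le_of_tendsto ht ?_
    filter_upwards [Ioo_mem_nhdsGT_of_mem
      (by constructor <;> norm_num : (0:ℝ) ∈ Set.Ico (0:ℝ) 1)] with θ hθ
    exact hkey θ hθ
  -- Cauchy–Schwarz setup
  set w := Cᵀ.mulVec (ν₁ - ν₂) with hw
  have hwd : (ν₂ - ν₁) ⬝ᵥ C.mulVec d = -(w ⬝ᵥ d) := by
    rw [dotProduct_mulVec, ← mulVec_transpose, hw, Matrix.mulVec_sub, Matrix.mulVec_sub,
      sub_dotProduct, sub_dotProduct]
    ring
  have hR : (ν₁ - ν₂) ⬝ᵥ (C * H⁻¹ * Cᵀ).mulVec (ν₁ - ν₂) = w ⬝ᵥ H⁻¹.mulVec w := by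
    rw [← Matrix.mulVec_mulVec, ← Matrix.mulVec_mulVec, dotProduct_mulVec, ← mulVec_transpose,
      ← hw]
  have ha1 : (H⁻¹.mulVec w) ⬝ᵥ H.mulVec d = w ⬝ᵥ d := by
    rw [dotProduct_mulVec, ← mulVec_transpose, hHsym, Matrix.mulVec_mulVec, hinv,
      Matrix.one_mulVec]
  have ha2 : (H⁻¹.mulVec w) ⬝ᵥ H.mulVec (H⁻¹.mulVec w) = w ⬝ᵥ H⁻¹.mulVec w := by
    rw [Matrix.mulVec_mulVec _ H H⁻¹, hinv, Matrix.one_mulVec, dotProduct_comm]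
  have hcs := cs_aux hH (H⁻¹.mulVec w) d
  rw [ha1, ha2] at hcs
  have hQ0 : 0 ≤ d ⬝ᵥ H.mulVec d := quad_nonneg hH d
  have hR0 : 0 ≤ w ⬝ᵥ H⁻¹.mulVec w := quad_nonneg hH.inv w
  rw [hR]
  rcases eq_or_lt_of_le hQ0 with hQz | hQpos
  · rw [← hQz, Real.sqrt_zero]
    exact Real.sqrt_nonneg _
  · apply Real.sqrt_le_sqrt
    rw [hwd] at hQK
    nlinarith [hcs, hQK, hQpos]
end

section
/- Let f : ℝ^n → ℝ be differentiable and strongly convex with matrix H ∈ S₊₊ⁿ, let h be proper, closed, and convex, and let C ∈ ℝ^{(m+p)×n}, c ∈ ℝ^{m+p}. Define the dual function d(ν) = min_x { f(x) + h(x) + νᵀ(Cx - c) }. Then d is concave, differentiable with ∇d(ν) = C x*(ν) - c where x*(ν) is the minimizer, and for every symmetric L ⪰ C H⁻¹ Cᵀ and all ν₁, ν₂: d(ν₁) ≥ d(ν₂) + ⟨∇d(ν₂), ν₁ - ν₂⟩ - (1/2)‖ν₁ - ν₂‖²_L. -/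
open Matrix

lemma ereal_fin_of_eq {a b : ℝ} {e : EReal} (he : e ≠ ⊥) (h : (a:EReal) = (b:EReal) + e) :
    ∃ r : ℝ, e = (r:EReal) ∧ a = b + r := by
  induction e using EReal.rec with
  | bot => exact absurd rfl he
  | coe r => exact ⟨r, rfl, by exact_mod_cast h⟩
  | top => simp at h

lemma ereal_fin_of_le {s : ℝ} {e : EReal} (he : e ≠ ⊥) (h : e ≤ (s:EReal)) :
    ∃ t : ℝ, e = (t:EReal) ∧ t ≤ s := by
  induction e using EReal.rec with
  | bot => exact absurd rfl he
  | coe r => exact ⟨r, rfl, by exact_mod_cast h⟩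
  | top => simp at h

lemma dp_swap {a b : ℕ} (A : Matrix (Fin a) (Fin b) ℝ) (x : Fin b → ℝ) (y : Fin a → ℝ) :
    (A *ᵥ x) ⬝ᵥ y = x ⬝ᵥ (Aᵀ *ᵥ y) := by
  simp only [dotProduct, Matrix.mulVec, Matrix.transpose_apply, Finset.sum_mul, Finset.mul_sum]
  rw [Finset.sum_comm]
  apply Finset.sum_congr rfl; intros; apply Finset.sum_congr rfl; intros; ring

lemma hmat_key {n q : ℕ} (H : Matrix (Fin n) (Fin n) ℝ) (hH : H.PosDef)
    (C : Matrix (Fin q) (Fin n) ℝ) (v : Fin q → ℝ) (w : Fin n → ℝ) :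
    -(1/2) * (v ⬝ᵥ (C * H⁻¹ * Cᵀ).mulVec v) ≤ v ⬝ᵥ C.mulVec w + (1/2) * (w ⬝ᵥ H.mulVec w) := by
  set u := Cᵀ.mulVec v with hu
  set z := H⁻¹.mulVec u with hz
  have hHinv : H * H⁻¹ = 1 := Matrix.mul_nonsing_inv H (isUnit_iff_ne_zero.mpr hH.det_pos.ne')
  have hHz : H.mulVec z = u := by
    rw [hz, Matrix.mulVec_mulVec, hHinv, Matrix.one_mulVec]
  have hsymm : Hᵀ = H := hH.isHermitian.eq
  have key : (0:ℝ) ≤ (w + z) ⬝ᵥ H.mulVec (w + z) := by have := hH.posSemidef.dotProduct_mulVec_nonneg (w + z); rwa [star_trivial] at this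
  have expand : (w + z) ⬝ᵥ H.mulVec (w + z) =
      w ⬝ᵥ H.mulVec w + w ⬝ᵥ u + z ⬝ᵥ H.mulVec w + z ⬝ᵥ u := by
    rw [Matrix.mulVec_add, hHz]
    simp [add_dotProduct, dotProduct_add]
    ring
  have hzHw : z ⬝ᵥ H.mulVec w = u ⬝ᵥ w := by
    rw [dotProduct_comm, dp_swap, hsymm, hHz, dotProduct_comm]
  have hwu : u ⬝ᵥ w = v ⬝ᵥ C.mulVec w := by
    rw [hu, dp_swap, Matrix.transpose_transpose]
  have hquad : v ⬝ᵥ (C * H⁻¹ * Cᵀ).mulVec v = u ⬝ᵥ z := by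
    rw [← Matrix.mulVec_mulVec, ← Matrix.mulVec_mulVec, dotProduct_comm, dp_swap,
      dotProduct_comm, hz, Matrix.mulVec_mulVec]
  have hcomm : z ⬝ᵥ u = u ⬝ᵥ z := dotProduct_comm z u
  have hwu2 : w ⬝ᵥ u = u ⬝ᵥ w := dotProduct_comm w u
  rw [expand] at key
  rw [hquad]
  linarith [key, hzHw, hwu, hcomm, hwu2]

/-- Theorem 8: the dual function `d(ν) = min_x { f(x) + h(x) + νᵀ(Cx - c) }` is concave,
differentiable with `∇d(ν) = C x*(ν) - c`, and satisfies the quadratic lower bound with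
any symmetric `L ⪰ C H⁻¹ Cᵀ`. -/
theorem dual_function_quad_lower_bound {n m p : ℕ} (f : (Fin n → ℝ) → ℝ)
    (f' : (Fin n → ℝ) → (Fin n → ℝ))
    (H : Matrix (Fin n) (Fin n) ℝ) (hH : H.PosDef)
    (hdiff : ∀ x, HasFDerivAt f (dotCLM (f' x)) x)
    (hstrong : ∀ x y, f y + f' y ⬝ᵥ (x - y)
        + (1 / 2) * ((x - y) ⬝ᵥ H.mulVec (x - y)) ≤ f x)
    (h : (Fin n → ℝ) → EReal)
    (hproper_bot : ∀ x, h x ≠ ⊥) (hproper_top : ∃ x, h x ≠ ⊤)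
    (hclosed : LowerSemicontinuous h)
    (hhconv : ∀ (x y : Fin n → ℝ) (θ : ℝ), 0 ≤ θ → θ ≤ 1 →
      h (θ • x + (1 - θ) • y) ≤ (θ : EReal) * h x + ((1 - θ : ℝ) : EReal) * h y)
    (C : Matrix (Fin (m + p)) (Fin n) ℝ) (c : Fin (m + p) → ℝ)
    (xs : (Fin (m + p) → ℝ) → (Fin n → ℝ))
    (hxs : ∀ ν x, ((f (xs ν) + ν ⬝ᵥ (C.mulVec (xs ν) - c) : ℝ) : EReal) + h (xs ν)
        ≤ ((f x + ν ⬝ᵥ (C.mulVec x - c) : ℝ) : EReal) + h x)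
    (d : (Fin (m + p) → ℝ) → ℝ)
    (hd : ∀ ν, (d ν : EReal)
        = ((f (xs ν) + ν ⬝ᵥ (C.mulVec (xs ν) - c) : ℝ) : EReal) + h (xs ν)) :
    ConcaveOn ℝ Set.univ d ∧
    (∀ ν, HasFDerivAt d (dotCLM (C.mulVec (xs ν) - c)) ν) ∧
    (∀ L : Matrix (Fin (m + p)) (Fin (m + p)) ℝ, L.IsSymm →
      (L - C * H⁻¹ * Cᵀ).PosSemidef →
      ∀ ν₁ ν₂, d ν₂ + (C.mulVec (xs ν₂) - c) ⬝ᵥ (ν₁ - ν₂)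
          - (1 / 2) * ((ν₁ - ν₂) ⬝ᵥ L.mulVec (ν₁ - ν₂)) ≤ d ν₁) := by
  -- finiteness of h at minimizers
  have hfin : ∀ ν, ∃ r : ℝ, h (xs ν) = (r:EReal) ∧
      d ν = f (xs ν) + ν ⬝ᵥ (C.mulVec (xs ν) - c) + r := fun ν =>
    ereal_fin_of_eq (hproper_bot (xs ν)) (hd ν)
  choose g hg hdg using hfin
  -- real optimality
  have hopt : ∀ ν x (r : ℝ), h x = (r:EReal) → d ν ≤ f x + ν ⬝ᵥ (C.mulVec x - c) + r := by
    intro ν x r hr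
    have h1 := hxs ν x
    rw [hg ν, hr, ← EReal.coe_add, ← EReal.coe_add] at h1
    rw [hdg ν]
    exact_mod_cast h1
  -- the strong-convexity descent inequality
  have hdesc : ∀ ν x (r : ℝ), h x = (r:EReal) →
      d ν + (1/2) * ((x - xs ν) ⬝ᵥ H.mulVec (x - xs ν)) ≤ f x + ν ⬝ᵥ (C.mulVec x - c) + r := by
    intro ν x r hr
    set Q := (x - xs ν) ⬝ᵥ H.mulVec (x - xs ν) with hQdef
    have hQ0 : 0 ≤ Q := by have := hH.posSemidef.dotProduct_mulVec_nonneg (x - xs ν); rwa [star_trivial] at this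
    have step : ∀ θ : ℝ, 0 < θ → θ ≤ 1 →
        d ν + (1-θ)/2 * Q ≤ f x + ν ⬝ᵥ (C.mulVec x - c) + r := by
      intro θ hθ0 hθ1
      set y := θ • x + (1 - θ) • (xs ν) with hy
      have hhy := hhconv x (xs ν) θ hθ0.le hθ1
      rw [hr, hg ν, ← EReal.coe_mul, ← EReal.coe_mul, ← EReal.coe_add] at hhy
      obtain ⟨t, hty, hts⟩ := ereal_fin_of_le (hproper_bot y) hhy
      have hs1 := hstrong x y
      have hs2 := hstrong (xs ν) y
      have hxy : x - y = (1 - θ) • (x - xs ν) := by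
        ext i; simp [hy]; ring
      have hx0y : xs ν - y = (-θ) • (x - xs ν) := by
        ext i; simp [hy]; ring
      rw [hxy] at hs1
      rw [hx0y] at hs2
      have q1 : ((1-θ) • (x - xs ν)) ⬝ᵥ H.mulVec ((1-θ) • (x - xs ν)) = (1-θ)*((1-θ)*Q) := by
        rw [Matrix.mulVec_smul, smul_dotProduct, dotProduct_smul,
          smul_eq_mul, smul_eq_mul]
      have q2 : ((-θ) • (x - xs ν)) ⬝ᵥ H.mulVec ((-θ) • (x - xs ν)) = (-θ)*((-θ)*Q) := by
        rw [Matrix.mulVec_smul, smul_dotProduct, dotProduct_smul,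
          smul_eq_mul, smul_eq_mul]
      have l1 : f' y ⬝ᵥ ((1-θ) • (x - xs ν)) = (1-θ) * (f' y ⬝ᵥ (x - xs ν)) := by
        rw [dotProduct_smul, smul_eq_mul]
      have l2 : f' y ⬝ᵥ ((-θ) • (x - xs ν)) = (-θ) * (f' y ⬝ᵥ (x - xs ν)) := by
        rw [dotProduct_smul, smul_eq_mul]
      rw [q1, l1] at hs1
      rw [q2, l2] at hs2
      have haff : ν ⬝ᵥ (C.mulVec y - c) = θ * (ν ⬝ᵥ (C.mulVec x - c))
          + (1-θ) * (ν ⬝ᵥ (C.mulVec (xs ν) - c)) := by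
        simp [hy, Matrix.mulVec_add, Matrix.mulVec_smul, dotProduct_sub,
          dotProduct_add, dotProduct_smul, smul_eq_mul]
        ring
      have hoy := hopt ν y t hty
      have hdd := hdg ν
      have hdd' : (1-θ) * (f (xs ν) + ν ⬝ᵥ (C.mulVec (xs ν) - c) + g ν) = (1-θ) * d ν := by
        rw [hdd]
      have final : θ * (d ν + (1-θ)/2 * Q) ≤ θ * (f x + ν ⬝ᵥ (C.mulVec x - c) + r) := by
        nlinarith [hoy, haff, hts, hdd', hs1, hs2,
          mul_le_mul_of_nonneg_left hs1 hθ0.le,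
          mul_le_mul_of_nonneg_left hs2 (by linarith : (0:ℝ) ≤ 1 - θ)]
      have := (mul_le_mul_iff_right₀ hθ0).mp final
      linarith
    have hε : ∀ ε : ℝ, 0 < ε →
        d ν + 1/2 * Q ≤ f x + ν ⬝ᵥ (C.mulVec x - c) + r + ε := by
      intro ε hε
      rcases eq_or_lt_of_le hQ0 with hQ | hQ
      · have := step 1 one_pos le_rfl
        rw [← hQ] at this ⊢
        simp at this ⊢
        linarith
      · set θ := min 1 (ε/Q) with hθdef
        have hθ0 : 0 < θ := lt_min one_pos (div_pos hε hQ)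
        have hθ1 : θ ≤ 1 := min_le_left _ _
        have hθQ : θ * Q ≤ ε := by
          have h2 : θ ≤ ε / Q := min_le_right _ _
          rw [le_div_iff₀ hQ] at h2
          exact h2
        have := step θ hθ0 hθ1
        linarith
    linarith [le_of_forall_pos_le_add (hε)]
  -- tangent upper bound
  have htan : ∀ ν₁ ν₂, d ν₁ ≤ d ν₂ + (C.mulVec (xs ν₂) - c) ⬝ᵥ (ν₁ - ν₂) := by
    intro ν₁ ν₂
    have h1 := hopt ν₁ (xs ν₂) (g ν₂) (hg ν₂)
    have h2 := hdg ν₂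
    have h3 : (C.mulVec (xs ν₂) - c) ⬝ᵥ (ν₁ - ν₂)
        = ν₁ ⬝ᵥ (C.mulVec (xs ν₂) - c) - ν₂ ⬝ᵥ (C.mulVec (xs ν₂) - c) := by
      rw [dotProduct_comm, sub_dotProduct]
    linarith
  -- quadratic lower bound with C H⁻¹ Cᵀ
  have hquad : ∀ ν₁ ν₂, d ν₂ + (C.mulVec (xs ν₂) - c) ⬝ᵥ (ν₁ - ν₂)
      - (1/2) * ((ν₁ - ν₂) ⬝ᵥ (C * H⁻¹ * Cᵀ).mulVec (ν₁ - ν₂)) ≤ d ν₁ := by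
    intro ν₁ ν₂
    have h1 := hdesc ν₂ (xs ν₁) (g ν₁) (hg ν₁)
    have h2 := hdg ν₁
    have h3 := hmat_key H hH C (ν₁ - ν₂) (xs ν₁ - xs ν₂)
    have e1 : (ν₁ - ν₂) ⬝ᵥ C.mulVec (xs ν₁ - xs ν₂)
        = (ν₁ ⬝ᵥ (C.mulVec (xs ν₁) - c) - ν₂ ⬝ᵥ (C.mulVec (xs ν₁) - c))
          - (C.mulVec (xs ν₂) - c) ⬝ᵥ (ν₁ - ν₂) := by
      rw [dotProduct_comm (C.mulVec (xs ν₂) - c)]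
      simp [Matrix.mulVec_sub, sub_dotProduct, dotProduct_sub]
      ring
    have e2 : (xs ν₁ - xs ν₂) ⬝ᵥ H.mulVec (xs ν₁ - xs ν₂)
        = (xs ν₁ - xs ν₂) ⬝ᵥ H.mulVec (xs ν₁ - xs ν₂) := rfl
    rw [e1] at h3
    linarith
  refine ⟨?_, ?_, ?_⟩
  · -- concavity
    refine ⟨convex_univ, ?_⟩
    intro x hx y hy a b ha hb hab
    have h1 := htan x (a • x + b • y)
    have h2 := htan y (a • x + b • y)
    set z := a • x + b • y with hz
    set w := C.mulVec (xs z) - c with hw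
    have key : a * (w ⬝ᵥ (x - z)) + b * (w ⬝ᵥ (y - z)) = 0 := by
      have hzero : a • (x - z) + b • (y - z) = 0 := by
        ext i
        simp [hz]
        linear_combination (-(a * x i + b * y i)) * hab
      have : w ⬝ᵥ (a • (x - z) + b • (y - z)) = 0 := by rw [hzero, dotProduct_zero]
      rw [dotProduct_add, dotProduct_smul, dotProduct_smul,
        smul_eq_mul, smul_eq_mul] at this
      exact this
    have hz1 : a * d z + b * d z = d z := by rw [← add_mul, hab, one_mul]
    have h1' := mul_le_mul_of_nonneg_left h1 ha
    have h2' := mul_le_mul_of_nonneg_left h2 hb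
    simp only [smul_eq_mul]
    nlinarith [h1', h2', key, hz1]
  · -- differentiability
    intro ν
    rw [hasFDerivAt_iff_isLittleO_nhds_zero]
    set M := C * H⁻¹ * Cᵀ with hM
    set K := ∑ i, ∑ j, |M i j| with hK
    have hK0 : 0 ≤ K := Finset.sum_nonneg fun i _ => Finset.sum_nonneg fun j _ => abs_nonneg _
    have hMb : ∀ v : Fin (m+p) → ℝ, |v ⬝ᵥ M.mulVec v| ≤ K * (‖v‖ * ‖v‖) := by
      intro v
      have hvi : ∀ i, |v i| ≤ ‖v‖ := fun i => by
        have := norm_le_pi_norm v i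
        simpa using this
      have inner : ∀ i, |M.mulVec v i| ≤ (∑ j, |M i j|) * ‖v‖ := by
        intro i
        have hrfl : M.mulVec v i = ∑ j, M i j * v j := rfl
        rw [hrfl, Finset.sum_mul]
        refine (Finset.abs_sum_le_sum_abs _ _).trans (Finset.sum_le_sum fun j _ => ?_)
        rw [abs_mul]
        exact mul_le_mul_of_nonneg_left (hvi j) (abs_nonneg _)
      have hdot : v ⬝ᵥ M.mulVec v = ∑ i, v i * M.mulVec v i := rfl
      rw [hdot]
      refine (Finset.abs_sum_le_sum_abs _ _).trans ?_
      have hterm : ∀ i ∈ Finset.univ, |v i * M.mulVec v i| ≤ (∑ j, |M i j|) * (‖v‖ * ‖v‖) := by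
        intro i _
        rw [abs_mul]
        calc |v i| * |M.mulVec v i| ≤ ‖v‖ * ((∑ j, |M i j|) * ‖v‖) :=
              mul_le_mul (hvi i) (inner i) (abs_nonneg _) (norm_nonneg v)
          _ = (∑ j, |M i j|) * (‖v‖ * ‖v‖) := by ring
      refine (Finset.sum_le_sum hterm).trans ?_
      rw [← Finset.sum_mul, hK]
    have hbound : ∀ v, |d (ν + v) - d ν - (C.mulVec (xs ν) - c) ⬝ᵥ v|
        ≤ 1/2 * (K * (‖v‖ * ‖v‖)) := by
      intro v
      have hup := htan (ν + v) ν
      have hlo := hquad (ν + v) ν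
      have hvv : ν + v - ν = v := add_sub_cancel_left ν v
      rw [hvv] at hup hlo
      have hMv := abs_le.mp (hMb v)
      have hnn : 0 ≤ K * (‖v‖ * ‖v‖) :=
        mul_nonneg hK0 (mul_nonneg (norm_nonneg v) (norm_nonneg v))
      rw [abs_le]
      constructor
      · linarith [hMv.1, hMv.2, le_abs_self (v ⬝ᵥ M.mulVec v)]
      · linarith
    rw [Asymptotics.isLittleO_iff]
    intro ε hε
    have hδpos : (0:ℝ) < ε / (K + 1) := by positivity
    filter_upwards [Metric.ball_mem_nhds (0 : Fin (m+p) → ℝ) hδpos] with v hv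
    rw [mem_ball_zero_iff] at hv
    have hKδ : K * (ε / (K+1)) ≤ ε := by
      rw [← mul_div_assoc, div_le_iff₀ (by linarith : (0:ℝ) < K + 1)]
      nlinarith
    have h1 : K * ‖v‖ ≤ K * (ε/(K+1)) := mul_le_mul_of_nonneg_left hv.le hK0
    have h2 : (K * ‖v‖) * ‖v‖ ≤ (K * (ε/(K+1))) * ‖v‖ :=
      mul_le_mul_of_nonneg_right h1 (norm_nonneg v)
    have h3 : (K * (ε/(K+1))) * ‖v‖ ≤ ε * ‖v‖ := mul_le_mul_of_nonneg_right hKδ (norm_nonneg v)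
    have h4 := hbound v
    have : ‖d (ν + v) - d ν - dotCLM (C.mulVec (xs ν) - c) v‖
        = |d (ν + v) - d ν - (C.mulVec (xs ν) - c) ⬝ᵥ v| := by
      rw [dotCLM_apply]; rfl
    rw [this]
    calc |d (ν + v) - d ν - (C.mulVec (xs ν) - c) ⬝ᵥ v| ≤ 1/2 * (K * (‖v‖ * ‖v‖)) := h4
      _ ≤ ε * ‖v‖ := by nlinarith [mul_nonneg hε.le (norm_nonneg v)]
  · -- quadratic lower bound with general L
    intro L hLsym hPSD ν₁ ν₂
    have h1 := hquad ν₁ ν₂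
    have h2 : (0:ℝ) ≤ (ν₁ - ν₂) ⬝ᵥ (L - C * H⁻¹ * Cᵀ).mulVec (ν₁ - ν₂) := by have := hPSD.dotProduct_mulVec_nonneg (ν₁ - ν₂); rwa [star_trivial] at this
    rw [Matrix.sub_mulVec, dotProduct_sub] at h2
    linarith
end

section
/- Let f(x) = (1/2)xᵀHx + ζᵀx with H ∈ S₊₊ⁿ, let A ∈ ℝ^{m×n} have full row rank, b ∈ ℝ^m, C ∈ ℝ^{q×n}, c ∈ ℝ^q, and let d(ν) = min_{x : Ax = b} { f(x) + νᵀ(Cx - c) }. Then d is a concave quadratic function of ν whose Hessian equals -C H^{-1/2}(I - M) H^{-1/2} Cᵀ, where M = H^{-1/2} Aᵀ (A H⁻¹ Aᵀ)⁻¹ A H^{-1/2}. -/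
open Matrix

private lemma dot_shift {k l : ℕ} (M : Matrix (Fin k) (Fin l) ℝ) (u : Fin k → ℝ)
    (v : Fin l → ℝ) : u ⬝ᵥ M *ᵥ v = Mᵀ *ᵥ u ⬝ᵥ v := by
  rw [Matrix.dotProduct_mulVec, ← Matrix.mulVec_transpose]

/-- The square root of a positive semidefinite matrix, as `Matrix.PosSemidef.sqrt` was defined
in Mathlib of December 2024 (removed since). -/
noncomputable def posSemidefSqrt {n : Type*} [Fintype n] [DecidableEq n]
    {A : Matrix n n ℝ} (hA : A.PosSemidef) : Matrix n n ℝ :=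
  hA.isHermitian.eigenvectorUnitary.1 * diagonal ((↑) ∘ (Real.sqrt ·) ∘ hA.isHermitian.eigenvalues) *
  (star hA.isHermitian.eigenvectorUnitary : Matrix n n ℝ)

set_option maxHeartbeats 1000000 in
/-- Proposition 10: with `f(x) = (1/2)xᵀHx + ζᵀx`, `H ≻ 0`, `A` of full row rank, the dual
function `d(ν) = min_{Ax=b} { f(x) + νᵀ(Cx - c) }` is a concave quadratic whose Hessian is
`-C H^{-1/2}(I - M) H^{-1/2} Cᵀ` with `M = H^{-1/2} Aᵀ (A H⁻¹ Aᵀ)⁻¹ A H^{-1/2}`. -/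
theorem dual_quadratic_affine_h {n m q : ℕ}
    (H : Matrix (Fin n) (Fin n) ℝ) (hH : H.PosDef) (ζ : Fin n → ℝ)
    (A : Matrix (Fin m) (Fin n) ℝ) (hA : A.rank = m) (b : Fin m → ℝ)
    (C : Matrix (Fin q) (Fin n) ℝ) (c : Fin q → ℝ)
    (d : (Fin q → ℝ) → ℝ)
    (hd : ∀ ν, IsLeast {r : ℝ | ∃ x, A.mulVec x = b ∧
        r = (1 / 2) * (x ⬝ᵥ H.mulVec x) + ζ ⬝ᵥ x + ν ⬝ᵥ (C.mulVec x - c)} (d ν)) :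
    ConcaveOn ℝ Set.univ d ∧
    ∃ (ξ : Fin q → ℝ) (θ : ℝ), ∀ ν,
      d ν = -(1 / 2) * (ν ⬝ᵥ (C * ((posSemidefSqrt hH.inv.posSemidef) *
              (1 - (posSemidefSqrt hH.inv.posSemidef) * Aᵀ * (A * H⁻¹ * Aᵀ)⁻¹ * A * (posSemidefSqrt hH.inv.posSemidef))
              * (posSemidefSqrt hH.inv.posSemidef)) * Cᵀ).mulVec ν)
            + ξ ⬝ᵥ ν + θ := by
  classical
  constructor
  · -- concavity: d is a pointwise least of affine functions of ν
    refine ⟨convex_univ, fun ν₁ _ ν₂ _ a β ha hb hab => ?_⟩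
    obtain ⟨⟨x₀, hx₀, hval⟩, -⟩ := hd (a • ν₁ + β • ν₂)
    have h1 : d ν₁ ≤ (1 / 2) * (x₀ ⬝ᵥ H.mulVec x₀) + ζ ⬝ᵥ x₀ + ν₁ ⬝ᵥ (C.mulVec x₀ - c) :=
      (hd ν₁).2 ⟨x₀, hx₀, rfl⟩
    have h2 : d ν₂ ≤ (1 / 2) * (x₀ ⬝ᵥ H.mulVec x₀) + ζ ⬝ᵥ x₀ + ν₂ ⬝ᵥ (C.mulVec x₀ - c) :=
      (hd ν₂).2 ⟨x₀, hx₀, rfl⟩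
    have hval' : d (a • ν₁ + β • ν₂) =
        (1 / 2) * (x₀ ⬝ᵥ H.mulVec x₀) + ζ ⬝ᵥ x₀
          + (a * (ν₁ ⬝ᵥ (C.mulVec x₀ - c)) + β * (ν₂ ⬝ᵥ (C.mulVec x₀ - c))) := by
      rw [hval, add_dotProduct, smul_dotProduct, smul_dotProduct]
      simp [smul_eq_mul]
    rw [hval', smul_eq_mul, smul_eq_mul]
    have hQ : a * ((1 / 2) * (x₀ ⬝ᵥ H.mulVec x₀) + ζ ⬝ᵥ x₀)
        + β * ((1 / 2) * (x₀ ⬝ᵥ H.mulVec x₀) + ζ ⬝ᵥ x₀)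
        = (1 / 2) * (x₀ ⬝ᵥ H.mulVec x₀) + ζ ⬝ᵥ x₀ := by
      rw [← add_mul, hab, one_mul]
    nlinarith [mul_le_mul_of_nonneg_left h1 ha, mul_le_mul_of_nonneg_left h2 hb, hQ]
  · -- explicit quadratic formula
    have hHdet : IsUnit H.det := H.isUnit_iff_isUnit_det.mp hH.isUnit
    have hHsym : Hᵀ = H := by simpa [Matrix.IsSymm] using hH.isHermitian
    have hHisym : (H⁻¹)ᵀ = H⁻¹ := by rw [Matrix.transpose_nonsing_inv, hHsym]
    -- injectivity of `Aᵀ *ᵥ ·`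
    have hinj : Function.Injective (Aᵀ.mulVec) := by
      have h1 := LinearMap.finrank_range_add_finrank_ker (Aᵀ).mulVecLin
      have h2 : (Aᵀ).rank = m := by rw [Matrix.rank_transpose]; exact hA
      have h3 : LinearMap.ker (Aᵀ).mulVecLin = ⊥ := by
        rw [Matrix.rank] at h2
        have hdm : Module.finrank ℝ (Fin m → ℝ) = m := by simp
        rw [h2, hdm] at h1
        exact Submodule.finrank_eq_zero.mp (by omega)
      have := LinearMap.ker_eq_bot.mp h3
      exact this
    set S : Matrix (Fin m) (Fin m) ℝ := A * H⁻¹ * Aᵀ with hSdef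
    have hSpd : S.PosDef := by
      refine Matrix.PosDef.of_dotProduct_mulVec_pos ?_ ?_
      · have h1 : (H⁻¹)ᴴ = H⁻¹ := hH.inv.isHermitian
        show (A * H⁻¹ * Aᵀ)ᴴ = _
        calc (A * H⁻¹ * Aᵀ)ᴴ = Aᵀᴴ * (H⁻¹)ᴴ * Aᴴ := by
              rw [Matrix.conjTranspose_mul, Matrix.conjTranspose_mul, Matrix.mul_assoc]
          _ = A * H⁻¹ * Aᵀ := by rw [h1]; congr 1
      · intro x hx
        have h0 : Aᵀ *ᵥ x ≠ 0 := fun h => hx (hinj (by simpa using h))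
        have := hH.inv.dotProduct_mulVec_pos h0
        simp only [star_trivial] at this ⊢
        have heq : x ⬝ᵥ (A * H⁻¹ * Aᵀ) *ᵥ x = (Aᵀ *ᵥ x) ⬝ᵥ H⁻¹ *ᵥ (Aᵀ *ᵥ x) := by
          rw [← Matrix.mulVec_mulVec, ← Matrix.mulVec_mulVec, Matrix.dotProduct_mulVec,
            ← Matrix.mulVec_transpose]
        rw [hSdef, heq]
        exact this
    have hSdet : IsUnit S.det := S.isUnit_iff_isUnit_det.mp hSpd.isUnit
    have hSsym : Sᵀ = S := by simpa [Matrix.IsSymm] using hSpd.isHermitian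
    have hSisym : (S⁻¹)ᵀ = S⁻¹ := by rw [Matrix.transpose_nonsing_inv, hSsym]
    have hSS : S * S⁻¹ = 1 := Matrix.mul_nonsing_inv S hSdet
    have hHH : H * H⁻¹ = 1 := Matrix.mul_nonsing_inv H hHdet
    set P : Matrix (Fin n) (Fin n) ℝ := H⁻¹ - H⁻¹ * Aᵀ * S⁻¹ * A * H⁻¹ with hPdef
    have hPsym : Pᵀ = P := by
      rw [hPdef, Matrix.transpose_sub, hHisym]
      congr 1
      simp only [Matrix.transpose_mul, hHisym, hSisym, Matrix.transpose_transpose]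
      simp [Matrix.mul_assoc]
    -- the matrix in the statement is `P`, conjugated by `C`
    have hsq : (posSemidefSqrt hH.inv.posSemidef) * (posSemidefSqrt hH.inv.posSemidef) = H⁻¹ :=
      by
      have hspec := hH.inv.posSemidef.isHermitian.spectral_theorem
      have hnn := hH.inv.posSemidef.eigenvalues_nonneg
      rw [Unitary.conjStarAlgAut_apply] at hspec
      unfold posSemidefSqrt
      have hU : (star hH.inv.posSemidef.isHermitian.eigenvectorUnitary : Matrix (Fin n) (Fin n) ℝ) *
          (hH.inv.posSemidef.isHermitian.eigenvectorUnitary : Matrix (Fin n) (Fin n) ℝ) = 1 := by simp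
      simp only [Matrix.mul_assoc]
      rw [← Matrix.mul_assoc _ (hH.inv.posSemidef.isHermitian.eigenvectorUnitary : Matrix (Fin n) (Fin n) ℝ), hU,
        Matrix.one_mul, ← Matrix.mul_assoc (diagonal _), diagonal_mul_diagonal]
      conv_rhs => rw [hspec]
      simp only [Matrix.mul_assoc]
      congr 3
      funext i
      simp [Real.mul_self_sqrt (hnn i)]
    have hmat : (posSemidefSqrt hH.inv.posSemidef) *
        (1 - (posSemidefSqrt hH.inv.posSemidef) * Aᵀ * (A * H⁻¹ * Aᵀ)⁻¹ * A * (posSemidefSqrt hH.inv.posSemidef))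
        * (posSemidefSqrt hH.inv.posSemidef) = P := by
      set R := (posSemidefSqrt hH.inv.posSemidef) with hR
      have h2 : R * (R * Aᵀ * S⁻¹ * A * R) * R = (R * R) * Aᵀ * S⁻¹ * A * (R * R) := by
        simp only [Matrix.mul_assoc]
      rw [hsq] at h2
      rw [← hSdef, mul_sub, sub_mul, mul_one, hsq, h2, hPdef]
    set u : Fin n → ℝ := (H⁻¹ * Aᵀ * S⁻¹) *ᵥ b with hudef
    refine ⟨C *ᵥ u - C *ᵥ (P *ᵥ ζ) - c,
      ζ ⬝ᵥ u + (1 / 2) * (b ⬝ᵥ S⁻¹ *ᵥ b) - (1 / 2) * (ζ ⬝ᵥ P *ᵥ ζ), fun ν => ?_⟩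
    rw [hmat]
    -- the minimizer
    set w : Fin n → ℝ := ζ + Cᵀ *ᵥ ν with hwdef
    set t : Fin m → ℝ := (A * H⁻¹) *ᵥ w with htdef
    set lam : Fin m → ℝ := -(S⁻¹ *ᵥ (b + t)) with hlamdef
    set xs : Fin n → ℝ := -(H⁻¹ *ᵥ (w + Aᵀ *ᵥ lam)) with hxsdef
    have hF0 : H *ᵥ xs = -(w + Aᵀ *ᵥ lam) := by
      rw [hxsdef, Matrix.mulVec_neg, Matrix.mulVec_mulVec, hHH, Matrix.one_mulVec]
    have hF1 : A *ᵥ xs = b := by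
      rw [hxsdef, Matrix.mulVec_neg, Matrix.mulVec_mulVec, Matrix.mulVec_add,
        Matrix.mulVec_mulVec, ← htdef, hlamdef, Matrix.mulVec_neg, Matrix.mulVec_mulVec,
        ← hSdef, ← Matrix.mulVec_mulVec, Matrix.mulVec_mulVec, hSS, Matrix.one_mulVec]
      simp
    -- d ν equals the value at the minimizer
    have hdle : d ν ≤ (1 / 2) * (xs ⬝ᵥ H *ᵥ xs) + ζ ⬝ᵥ xs + ν ⬝ᵥ (C *ᵥ xs - c) :=
      (hd ν).2 ⟨xs, hF1, rfl⟩
    have hgroundle : ∀ x, A *ᵥ x = b →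
        (1 / 2) * (xs ⬝ᵥ H *ᵥ xs) + ζ ⬝ᵥ xs + ν ⬝ᵥ (C *ᵥ xs - c) ≤
        (1 / 2) * (x ⬝ᵥ H *ᵥ x) + ζ ⬝ᵥ x + ν ⬝ᵥ (C *ᵥ x - c) := by
      intro x hx
      set e : Fin n → ℝ := x - xs with hedef
      have hxe : x = e + xs := by rw [hedef]; abel
      have hAe : A *ᵥ e = 0 := by
        rw [hedef, Matrix.mulVec_sub, hx, hF1, sub_self]
      have h_e1 : e ⬝ᵥ Aᵀ *ᵥ lam = 0 := by
        rw [dot_shift, Matrix.transpose_transpose, hAe, zero_dotProduct]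
      have h_e2 : xs ⬝ᵥ H *ᵥ e = e ⬝ᵥ H *ᵥ xs := by
        rw [dot_shift, hHsym, dotProduct_comm]
      have h_e3 : e ⬝ᵥ H *ᵥ xs = -(e ⬝ᵥ w) := by
        rw [hF0, dotProduct_neg, dotProduct_add, h_e1, add_zero]
      have h_e4 : e ⬝ᵥ w = ζ ⬝ᵥ e + ν ⬝ᵥ C *ᵥ e := by
        rw [dotProduct_comm, hwdef, add_dotProduct, dot_shift C ν (e)]
      have h_pos : 0 ≤ e ⬝ᵥ H *ᵥ e := by
        have := hH.posSemidef.dotProduct_mulVec_nonneg e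
        simpa using this
      rw [hxe]
      simp only [Matrix.mulVec_add, dotProduct_add, add_dotProduct,
        dotProduct_sub, Matrix.mulVec_sub]
      rw [h_e2, h_e3, h_e4] at *
      linarith
    have hdeq : d ν = (1 / 2) * (xs ⬝ᵥ H *ᵥ xs) + ζ ⬝ᵥ xs + ν ⬝ᵥ (C *ᵥ xs - c) := by
      obtain ⟨⟨x₀, hx₀, hval⟩, -⟩ := hd ν
      have := hgroundle x₀ hx₀
      rw [hval]
      linarith [hval ▸ this]
    rw [hdeq]
    -- now compute the value at the minimizer
    have ha : xs ⬝ᵥ H *ᵥ xs = -(w ⬝ᵥ xs) - b ⬝ᵥ lam := by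
      rw [hF0, dotProduct_neg, dotProduct_add,
        dot_shift Aᵀ xs lam, Matrix.transpose_transpose, hF1,
        dotProduct_comm xs w]
      ring
    have hb' : w ⬝ᵥ xs = -(w ⬝ᵥ H⁻¹ *ᵥ w) - t ⬝ᵥ lam := by
      have hmt : (H⁻¹ * Aᵀ)ᵀ = A * H⁻¹ := by
        rw [Matrix.transpose_mul, Matrix.transpose_transpose, hHisym]
      rw [hxsdef, dotProduct_neg, Matrix.mulVec_add, dotProduct_add,
        Matrix.mulVec_mulVec, dot_shift (H⁻¹ * Aᵀ) w lam, hmt, ← htdef]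
      ring
    have hc' : t ⬝ᵥ lam = -(t ⬝ᵥ S⁻¹ *ᵥ b) - t ⬝ᵥ S⁻¹ *ᵥ t := by
      rw [hlamdef, dotProduct_neg, Matrix.mulVec_add, dotProduct_add]
      ring
    have hd' : b ⬝ᵥ lam = -(b ⬝ᵥ S⁻¹ *ᵥ b) - t ⬝ᵥ S⁻¹ *ᵥ b := by
      rw [hlamdef, dotProduct_neg, Matrix.mulVec_add, dotProduct_add,
        dot_shift S⁻¹ b t, hSisym, dotProduct_comm (S⁻¹ *ᵥ b) t]
      ring
    have he' : t ⬝ᵥ S⁻¹ *ᵥ t = w ⬝ᵥ (H⁻¹ * Aᵀ * S⁻¹ * A * H⁻¹) *ᵥ w := by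
      have hmm : H⁻¹ * Aᵀ * S⁻¹ * A * H⁻¹ = (A * H⁻¹)ᵀ * (S⁻¹ * (A * H⁻¹)) := by
        rw [Matrix.transpose_mul, hHisym]
        simp [Matrix.mul_assoc]
      rw [hmm, ← Matrix.mulVec_mulVec, dot_shift ((A * H⁻¹)ᵀ) w,
        Matrix.transpose_transpose, ← htdef, ← Matrix.mulVec_mulVec w S⁻¹ (A * H⁻¹),
        ← htdef]
    have hf' : t ⬝ᵥ S⁻¹ *ᵥ b = w ⬝ᵥ u := by
      have hmm : H⁻¹ * Aᵀ * S⁻¹ = (A * H⁻¹)ᵀ * S⁻¹ := by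
        rw [Matrix.transpose_mul, hHisym]
      rw [hudef, hmm, ← Matrix.mulVec_mulVec, dot_shift ((A * H⁻¹)ᵀ) w,
        Matrix.transpose_transpose, ← htdef]
    have hg' : w ⬝ᵥ P *ᵥ w = w ⬝ᵥ H⁻¹ *ᵥ w - w ⬝ᵥ (H⁻¹ * Aᵀ * S⁻¹ * A * H⁻¹) *ᵥ w := by
      rw [hPdef, Matrix.sub_mulVec, dotProduct_sub]
    -- expansion of the quadratic in ν
    have hq1 : ν ⬝ᵥ (C * P * Cᵀ) *ᵥ ν = (Cᵀ *ᵥ ν) ⬝ᵥ P *ᵥ (Cᵀ *ᵥ ν) := by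
      rw [Matrix.mul_assoc, ← Matrix.mulVec_mulVec, dot_shift C ν, ← Matrix.mulVec_mulVec]
    have hq2 : ν ⬝ᵥ C *ᵥ (P *ᵥ ζ) = (Cᵀ *ᵥ ν) ⬝ᵥ P *ᵥ ζ := dot_shift C ν _
    have hq3 : ζ ⬝ᵥ P *ᵥ (Cᵀ *ᵥ ν) = (Cᵀ *ᵥ ν) ⬝ᵥ P *ᵥ ζ := by
      rw [dot_shift P ζ, hPsym, dotProduct_comm]
    have hq4 : ν ⬝ᵥ C *ᵥ u = (Cᵀ *ᵥ ν) ⬝ᵥ u := dot_shift C ν u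
    have hexp : w ⬝ᵥ P *ᵥ w =
        ζ ⬝ᵥ P *ᵥ ζ + 2 * (ν ⬝ᵥ C *ᵥ (P *ᵥ ζ)) + ν ⬝ᵥ (C * P * Cᵀ) *ᵥ ν := by
      rw [hwdef, add_dotProduct, Matrix.mulVec_add, dotProduct_add,
        dotProduct_add, hq1, hq2, hq3]
      ring
    have hwu : w ⬝ᵥ u = ζ ⬝ᵥ u + ν ⬝ᵥ C *ᵥ u := by
      rw [hwdef, add_dotProduct, hq4]
    -- the linear coefficient
    have hxi : (C *ᵥ u - C *ᵥ (P *ᵥ ζ) - c) ⬝ᵥ ν =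
        ν ⬝ᵥ C *ᵥ u - ν ⬝ᵥ C *ᵥ (P *ᵥ ζ) - ν ⬝ᵥ c := by
      rw [sub_dotProduct, sub_dotProduct, dotProduct_comm,
        dotProduct_comm (C *ᵥ (P *ᵥ ζ)), dotProduct_comm c]
    -- value of the linear part of the objective at xs
    have hlin : ζ ⬝ᵥ xs + ν ⬝ᵥ (C *ᵥ xs - c) = w ⬝ᵥ xs - ν ⬝ᵥ c := by
      rw [dotProduct_sub, hwdef, add_dotProduct, dot_shift C ν xs]
      ring
    rw [hxi]
    have : (1 : ℝ) / 2 * (xs ⬝ᵥ H *ᵥ xs) + ζ ⬝ᵥ xs + ν ⬝ᵥ (C *ᵥ xs - c)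
        = -(1 / 2) * (w ⬝ᵥ P *ᵥ w) + w ⬝ᵥ u + (1 / 2) * (b ⬝ᵥ S⁻¹ *ᵥ b) - ν ⬝ᵥ c := by
      have h1 := ha
      rw [hb'] at h1
      rw [hc', hd'] at h1
      rw [he', hf'] at h1
      have h2 := hb'
      rw [hc', he', hf'] at h2
      have h3 : ζ ⬝ᵥ xs + ν ⬝ᵥ (C *ᵥ xs - c) = w ⬝ᵥ xs - ν ⬝ᵥ c := hlin
      rw [hg']
      linarith
    rw [this, hexp, hwu]
    ring
end

section
/- Let H ∈ S₊ⁿ and A ∈ ℝ^{m×n} with full row rank, such that H is positive definite on the null-space of A, and let [[K₁₁, K₁₂],[K₂₁, K₂₂]] be the inverse of the KKT matrix [[H, Aᵀ],[A, 0]]. Then K₁₁ H K₁₁ = K₁₁ and A K₁₁ = 0. -/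
open Matrix

/-- With `H ⪰ 0` positive definite on the null-space of the full-row-rank matrix `A`, and
`K₁₁` the upper-left block of the inverse of the KKT matrix `[[H, Aᵀ],[A, 0]]`, one has
`K₁₁ H K₁₁ = K₁₁` and `A K₁₁ = 0`. -/
theorem kkt_inverse_block_identities {n m : ℕ}
    (H : Matrix (Fin n) (Fin n) ℝ) (hH : H.PosSemidef)
    (A : Matrix (Fin m) (Fin n) ℝ) (hA : A.rank = m)
    (hker : ∀ x : Fin n → ℝ, x ≠ 0 → A.mulVec x = 0 → 0 < x ⬝ᵥ H.mulVec x) :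
    (Matrix.fromBlocks H Aᵀ A 0)⁻¹.toBlocks₁₁ * H * (Matrix.fromBlocks H Aᵀ A 0)⁻¹.toBlocks₁₁
      = (Matrix.fromBlocks H Aᵀ A 0)⁻¹.toBlocks₁₁ ∧
    A * (Matrix.fromBlocks H Aᵀ A 0)⁻¹.toBlocks₁₁ = 0 := by
  set M : Matrix (Fin n ⊕ Fin m) (Fin n ⊕ Fin m) ℝ := Matrix.fromBlocks H Aᵀ A 0 with hM
  -- surjectivity of `A.mulVecLin` from full row rank
  have hsurj : LinearMap.range A.mulVecLin = ⊤ := by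
    apply Submodule.eq_top_of_finrank_eq
    rw [← Matrix.rank, hA]
    simp
  have hAt : ∀ y : Fin m → ℝ, Aᵀ.mulVec y = 0 → y = 0 := by
    intro y hy
    have hz : ∀ z : Fin n → ℝ, y ⬝ᵥ A.mulVec z = 0 := by
      intro z
      rw [Matrix.dotProduct_mulVec, ← Matrix.mulVec_transpose, hy, zero_dotProduct]
    obtain ⟨z, hz'⟩ := LinearMap.range_eq_top.mp hsurj y
    have hyy : y ⬝ᵥ y = 0 := by
      have := hz z
      rwa [show A.mulVec z = y from hz'] at this
    exact dotProduct_self_eq_zero.mp hyy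
  -- the KKT matrix has nonzero determinant
  have hdet : M.det ≠ 0 := by
    intro h
    obtain ⟨v, hv, hMv⟩ := Matrix.exists_mulVec_eq_zero_iff.mpr h
    rw [hM, Matrix.fromBlocks_mulVec] at hMv
    set x : Fin n → ℝ := v ∘ Sum.inl with hx
    set y : Fin m → ℝ := v ∘ Sum.inr with hy
    have h1 : H.mulVec x + Aᵀ.mulVec y = 0 := by
      funext i
      simpa using congrFun hMv (Sum.inl i)
    have h2 : A.mulVec x = 0 := by
      funext i
      simpa using congrFun hMv (Sum.inr i)
    have hxHx : x ⬝ᵥ H.mulVec x = 0 := by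
      have e1 : x ⬝ᵥ (H.mulVec x + Aᵀ.mulVec y) = 0 := by rw [h1, dotProduct_zero]
      have e2 : x ⬝ᵥ Aᵀ.mulVec y = 0 := by
        rw [Matrix.dotProduct_mulVec, ← Matrix.mulVec_transpose, Matrix.transpose_transpose,
          h2, zero_dotProduct]
      rw [dotProduct_add, e2, add_zero] at e1
      exact e1
    have hx0 : x = 0 := by
      by_contra hx0
      exact absurd hxHx (ne_of_gt (hker x hx0 h2))
    have hy0 : y = 0 := by
      apply hAt
      have := h1
      rw [hx0, Matrix.mulVec_zero, zero_add] at this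
      exact this
    apply hv
    funext i
    cases i with
    | inl i => exact congrFun hx0 i
    | inr i => exact congrFun hy0 i
  have hdet' : IsUnit M.det := isUnit_iff_ne_zero.mpr hdet
  have hinv1 : M * M⁻¹ = 1 := Matrix.mul_nonsing_inv M hdet'
  have hinv2 : M⁻¹ * M = 1 := Matrix.nonsing_inv_mul M hdet'
  set K := M⁻¹ with hK
  have hKb : K = Matrix.fromBlocks K.toBlocks₁₁ K.toBlocks₁₂ K.toBlocks₂₁ K.toBlocks₂₂ :=
    (Matrix.fromBlocks_toBlocks K).symm
  -- A * K₁₁ = 0 : block (2,1) of M * K = 1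
  have hAK : A * K.toBlocks₁₁ = 0 := by
    have := hinv1
    rw [hM, hKb, Matrix.fromBlocks_multiply] at this
    have h21 := congrArg Matrix.toBlocks₂₁ this
    rw [Matrix.toBlocks_fromBlocks₂₁] at h21
    have h0 : (1 : Matrix (Fin n ⊕ Fin m) (Fin n ⊕ Fin m) ℝ).toBlocks₂₁ = 0 := by
      ext i j; simp [Matrix.toBlocks₂₁, Matrix.one_apply]
    rw [h0] at h21
    simpa using h21
  refine ⟨?_, hAK⟩
  -- K₁₁ * H + K₁₂ * A = 1 : block (1,1) of K * M = 1
  have h11 : K.toBlocks₁₁ * H + K.toBlocks₁₂ * A = 1 := by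
    have := hinv2
    rw [hM, hKb, Matrix.fromBlocks_multiply] at this
    have h := congrArg Matrix.toBlocks₁₁ this
    rw [Matrix.toBlocks_fromBlocks₁₁] at h
    have h' : K.toBlocks₁₁ * H + K.toBlocks₁₂ * A = (1 : Matrix (Fin n ⊕ Fin m) (Fin n ⊕ Fin m) ℝ).toBlocks₁₁ := h
    rw [h']
    ext i j
    simp [Matrix.toBlocks₁₁, Matrix.one_apply, Sum.inl_injective.eq_iff]
  have := congrArg (· * K.toBlocks₁₁) h11
  simpa [add_mul, Matrix.mul_assoc, hAK] using this
end

section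
/- Let g : ℝ^n → ℝ ∪ {∞} be proper, closed, and convex, and let L ∈ S₊₊ⁿ be symmetric positive definite. Define prox_ψ^L(x) = argmin_y { ψ(y) + (1/2)‖y - x‖²_L }. Then for every x ∈ ℝ^n: prox_{g*}^L(x) + L⁻¹ prox_g^{L⁻¹}(L x) = x, where g* is the convex conjugate of g. -/
open Matrix

section aux
variable {n : ℕ}

lemma dot_symm_of (A : Matrix (Fin n) (Fin n) ℝ) (h : Aᵀ = A) (u v : Fin n → ℝ) :
    u ⬝ᵥ A *ᵥ v = v ⬝ᵥ A *ᵥ u := by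
  rw [Matrix.dotProduct_mulVec, ← Matrix.mulVec_transpose, h, dotProduct_comm]

lemma quad_expand (A : Matrix (Fin n) (Fin n) ℝ) (hs : ∀ u v, u ⬝ᵥ A *ᵥ v = v ⬝ᵥ A *ᵥ u)
    (a d : Fin n → ℝ) (t : ℝ) :
    (a + t • d) ⬝ᵥ A *ᵥ (a + t • d)
      = a ⬝ᵥ A *ᵥ a + 2 * t * (a ⬝ᵥ A *ᵥ d) + t ^ 2 * (d ⬝ᵥ A *ᵥ d) := by
  simp only [Matrix.mulVec_add, Matrix.mulVec_smul, dotProduct_add,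
    add_dotProduct, dotProduct_smul, smul_dotProduct, smul_eq_mul,
    hs d a]
  ring

lemma quad_par (A : Matrix (Fin n) (Fin n) ℝ) (hs : ∀ u v, u ⬝ᵥ A *ᵥ v = v ⬝ᵥ A *ᵥ u)
    (a b : Fin n → ℝ) :
    ((1/2 : ℝ) • a + (1/2 : ℝ) • b) ⬝ᵥ A *ᵥ ((1/2 : ℝ) • a + (1/2 : ℝ) • b)
      = (1/2) * (a ⬝ᵥ A *ᵥ a) + (1/2) * (b ⬝ᵥ A *ᵥ b) - (1/4) * ((a - b) ⬝ᵥ A *ᵥ (a - b)) := by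
  simp only [Matrix.mulVec_add, Matrix.mulVec_smul, Matrix.mulVec_sub, dotProduct_add,
    add_dotProduct, dotProduct_smul, smul_dotProduct, smul_eq_mul,
    sub_dotProduct, dotProduct_sub, hs b a]
  ring

end aux

/-- The Fenchel conjugate of an extended-real-valued function on `ℝⁿ`. -/
noncomputable def econj {n : ℕ} (g : (Fin n → ℝ) → EReal) (y : Fin n → ℝ) : EReal :=
  ⨆ w, ((y ⬝ᵥ w : ℝ) : EReal) - g w

/-- Proposition 14 (generalized Moreau decomposition): for proper closed convex `g` and
`L ≻ 0`, `prox_{g*}^L(x) + L⁻¹ prox_g^{L⁻¹}(Lx) = x`. Here `p = prox_{g*}^L(x)` and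
`q = prox_g^{L⁻¹}(Lx)` are characterized as the minimizers of the respective objectives. -/
theorem generalized_moreau_decomposition {n : ℕ}
    (g : (Fin n → ℝ) → EReal)
    (hproper_bot : ∀ x, g x ≠ ⊥) (hproper_top : ∃ x, g x ≠ ⊤)
    (hclosed : LowerSemicontinuous g)
    (hgconv : ∀ (x y : Fin n → ℝ) (θ : ℝ), 0 ≤ θ → θ ≤ 1 →
      g (θ • x + (1 - θ) • y) ≤ (θ : EReal) * g x + ((1 - θ : ℝ) : EReal) * g y)
    (L : Matrix (Fin n) (Fin n) ℝ) (hL : L.PosDef)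
    (x p q : Fin n → ℝ)
    (hp : ∀ z, econj g p + (((1 / 2) * ((p - x) ⬝ᵥ L.mulVec (p - x)) : ℝ) : EReal)
        ≤ econj g z + (((1 / 2) * ((z - x) ⬝ᵥ L.mulVec (z - x)) : ℝ) : EReal))
    (hq : ∀ z, g q + (((1 / 2) * ((q - L.mulVec x) ⬝ᵥ (L⁻¹).mulVec (q - L.mulVec x)) : ℝ) : EReal)
        ≤ g z + (((1 / 2) * ((z - L.mulVec x) ⬝ᵥ (L⁻¹).mulVec (z - L.mulVec x)) : ℝ) : EReal)) :
    p + (L⁻¹).mulVec q = x := by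
  set M := L⁻¹ with hM
  -- basic matrix facts
  have hLdet : IsUnit L.det := isUnit_iff_isUnit_det _ |>.1 hL.isUnit
  have hLsymm : Lᵀ = L := by
    rw [← L.conjTranspose_eq_transpose_of_trivial]; exact hL.isHermitian.eq
  have hMsymm : Mᵀ = M := by rw [hM, Matrix.transpose_nonsing_inv, hLsymm]
  have hLs : ∀ u v, u ⬝ᵥ L *ᵥ v = v ⬝ᵥ L *ᵥ u := dot_symm_of L hLsymm
  have hMs : ∀ u v, u ⬝ᵥ M *ᵥ v = v ⬝ᵥ M *ᵥ u := dot_symm_of M hMsymm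
  have hLM : ∀ u, L *ᵥ (M *ᵥ u) = u := by
    intro u; rw [Matrix.mulVec_mulVec, hM, Matrix.mul_nonsing_inv _ hLdet, Matrix.one_mulVec]
  have hML : ∀ u, M *ᵥ (L *ᵥ u) = u := by
    intro u; rw [Matrix.mulVec_mulVec, hM, Matrix.nonsing_inv_mul _ hLdet, Matrix.one_mulVec]
  have hLpos : ∀ u, 0 ≤ u ⬝ᵥ L *ᵥ u := fun u => by simpa using hL.posSemidef.dotProduct_mulVec_nonneg u
  -- g q is real
  have hq_bot : g q ≠ ⊥ := hproper_bot q
  have hq_top : g q ≠ ⊤ := by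
    intro h
    obtain ⟨w₀, hw₀⟩ := hproper_top
    have h1 := hq w₀
    rw [h, EReal.top_add_coe] at h1
    exact (EReal.add_lt_top hw₀ (EReal.coe_ne_top _)).not_ge h1
  set gq : ℝ := (g q).toReal with hgqdef
  have hgq : (gq : EReal) = g q := EReal.coe_toReal hq_top hq_bot
  set v : Fin n → ℝ := x - M *ᵥ q with hv
  -- subgradient inequality at q (real form)
  have hsubR : ∀ w, g w ≠ ⊤ → gq + v ⬝ᵥ (w - q) ≤ (g w).toReal := by
    intro w hw_top
    set gw : ℝ := (g w).toReal with hgwdef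
    have hgw : (gw : EReal) = g w := EReal.coe_toReal hw_top (hproper_bot w)
    set d : Fin n → ℝ := w - q with hd
    set A : ℝ := (q - L *ᵥ x) ⬝ᵥ M *ᵥ d with hA
    set B : ℝ := d ⬝ᵥ M *ᵥ d with hB
    have key : ∀ t : ℝ, 0 < t → t ≤ 1 → gq ≤ gw + A + t * (B / 2) := by
      intro t ht ht1
      have hz : t • w + (1 - t) • q = q + t • d := by rw [hd]; module
      have hzsub : q + t • d - L *ᵥ x = (q - L *ᵥ x) + t • d := by module
      have h1 := hq (t • w + (1 - t) • q)
      have h2 := hgconv w q t ht.le ht1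
      rw [← hgw, ← hgq, ← EReal.coe_mul, ← EReal.coe_mul, ← EReal.coe_add] at h2
      have h3 : g (t • w + (1 - t) • q)
          + (((1 / 2) * ((t • w + (1 - t) • q - L *ᵥ x) ⬝ᵥ M *ᵥ (t • w + (1 - t) • q - L *ᵥ x)) : ℝ) : EReal)
          ≤ (((t * gw + (1 - t) * gq) + (1 / 2) * ((t • w + (1 - t) • q - L *ᵥ x) ⬝ᵥ M *ᵥ (t • w + (1 - t) • q - L *ᵥ x)) : ℝ) : EReal) := by
        rw [EReal.coe_add]
        exact add_le_add_left h2 _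
      have h4 := le_trans h1 h3
      rw [← hgq, ← EReal.coe_add, EReal.coe_le_coe_iff] at h4
      rw [hz, hzsub, quad_expand M hMs (q - L *ᵥ x) d t] at h4
      have h5 : t * gq ≤ t * (gw + A + t * (B / 2)) := by nlinarith [h4]
      exact le_of_mul_le_mul_left h5 ht
    have hvd : v ⬝ᵥ d = -A := by
      have e1 : v ⬝ᵥ d = x ⬝ᵥ d - (M *ᵥ q) ⬝ᵥ d := by rw [hv, sub_dotProduct]
      have e2 : A = q ⬝ᵥ M *ᵥ d - (L *ᵥ x) ⬝ᵥ M *ᵥ d := by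
        rw [hA, sub_dotProduct]
      have e3 : (L *ᵥ x) ⬝ᵥ M *ᵥ d = x ⬝ᵥ d := by
        rw [hMs (L *ᵥ x) d, hML, dotProduct_comm]
      have e4 : (M *ᵥ q) ⬝ᵥ d = q ⬝ᵥ M *ᵥ d := by
        rw [dotProduct_comm, hMs d q]
      linarith
    by_contra hcon
    push_neg at hcon
    rw [hvd] at hcon
    have hε : 0 < gq - gw - A := by linarith
    set C : ℝ := |B / 2| + 1 with hCdef
    have hC0 : 0 < C := by positivity
    set t : ℝ := min 1 ((gq - gw - A) / (2 * C)) with htdef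
    have ht0 : 0 < t := lt_min one_pos (by positivity)
    have ht1 : t ≤ 1 := min_le_left _ _
    have h6 := key t ht0 ht1
    have h7 : t * (B / 2) ≤ t * C := by
      have hBC : B / 2 ≤ C := by
        have := le_abs_self (B / 2); rw [hCdef]; linarith
      exact mul_le_mul_of_nonneg_left hBC ht0.le
    have h8 : t ≤ (gq - gw - A) / (2 * C) := min_le_right _ _
    have h9 : t * C ≤ (gq - gw - A) / 2 := by
      calc t * C ≤ ((gq - gw - A) / (2 * C)) * C := mul_le_mul_of_nonneg_right h8 hC0.le
        _ = (gq - gw - A) / 2 := by field_simp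
    linarith
  -- conjugate bounds
  have hle_conj : ∀ y : Fin n → ℝ, ((y ⬝ᵥ q - gq : ℝ) : EReal) ≤ econj g y := by
    intro y
    calc ((y ⬝ᵥ q - gq : ℝ) : EReal) = ((y ⬝ᵥ q : ℝ) : EReal) - (gq : EReal) := EReal.coe_sub _ _
      _ = ((y ⬝ᵥ q : ℝ) : EReal) - g q := by rw [hgq]
      _ ≤ econj g y := le_iSup (fun w => ((y ⬝ᵥ w : ℝ) : EReal) - g w) q
  have hconjv : econj g v = ((v ⬝ᵥ q - gq : ℝ) : EReal) := by
    refine le_antisymm ?_ (hle_conj v)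
    refine iSup_le fun w => ?_
    rcases eq_or_ne (g w) ⊤ with hw | hw
    · rw [hw, EReal.sub_top]; exact bot_le
    · have hgw : ((g w).toReal : EReal) = g w := EReal.coe_toReal hw (hproper_bot w)
      have h1 := hsubR w hw
      rw [← hgw, ← EReal.coe_sub, EReal.coe_le_coe_iff]
      have h2 : v ⬝ᵥ (w - q) = v ⬝ᵥ w - v ⬝ᵥ q := dotProduct_sub _ _ _
      linarith
  -- F(v) ≤ F(z) for all z
  have hFv : ∀ z, econj g v + (((1 / 2) * ((v - x) ⬝ᵥ L *ᵥ (v - x)) : ℝ) : EReal)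
      ≤ econj g z + (((1 / 2) * ((z - x) ⬝ᵥ L *ᵥ (z - x)) : ℝ) : EReal) := by
    intro z
    have hvx : v - x = -(M *ᵥ q) := by rw [hv]; module
    have e0 : (v - x) ⬝ᵥ L *ᵥ (v - x) = (M *ᵥ q) ⬝ᵥ q := by
      rw [hvx, neg_dotProduct, Matrix.mulVec_neg, dotProduct_neg, neg_neg, hLM q]
    have upos := hLpos (z - x + M *ᵥ q)
    have expand : (z - x + M *ᵥ q) ⬝ᵥ L *ᵥ (z - x + M *ᵥ q)
        = (z - x) ⬝ᵥ L *ᵥ (z - x) + 2 * ((z - x) ⬝ᵥ q) + (M *ᵥ q) ⬝ᵥ q := by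
      simp only [Matrix.mulVec_add, dotProduct_add, add_dotProduct,
        hLs (M *ᵥ q) (z - x), hLM q]
      ring
    have e1 : v ⬝ᵥ q = x ⬝ᵥ q - (M *ᵥ q) ⬝ᵥ q := by rw [hv, sub_dotProduct]
    have e2 : (z - x) ⬝ᵥ q = z ⬝ᵥ q - x ⬝ᵥ q := sub_dotProduct _ _ _
    have h3 : v ⬝ᵥ q - gq + (1 / 2) * ((v - x) ⬝ᵥ L *ᵥ (v - x))
        ≤ z ⬝ᵥ q - gq + (1 / 2) * ((z - x) ⬝ᵥ L *ᵥ (z - x)) := by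
      rw [e0]; linarith
    calc econj g v + (((1 / 2) * ((v - x) ⬝ᵥ L *ᵥ (v - x)) : ℝ) : EReal)
        = ((v ⬝ᵥ q - gq + (1 / 2) * ((v - x) ⬝ᵥ L *ᵥ (v - x)) : ℝ) : EReal) := by
          rw [hconjv, ← EReal.coe_add]
      _ ≤ ((z ⬝ᵥ q - gq + (1 / 2) * ((z - x) ⬝ᵥ L *ᵥ (z - x)) : ℝ) : EReal) :=
          EReal.coe_le_coe_iff.2 h3
      _ = ((z ⬝ᵥ q - gq : ℝ) : EReal) + (((1 / 2) * ((z - x) ⬝ᵥ L *ᵥ (z - x)) : ℝ) : EReal) :=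
          EReal.coe_add _ _
      _ ≤ econj g z + (((1 / 2) * ((z - x) ⬝ᵥ L *ᵥ (z - x)) : ℝ) : EReal) :=
          add_le_add_left (hle_conj z) _
  -- F(p) = F(v), econj g p is real
  have hpv := hp v
  have hvp := hFv p
  have hp_netop : econj g p ≠ ⊤ := by
    intro h
    rw [h, EReal.top_add_coe, hconjv, ← EReal.coe_add] at hpv
    exact (EReal.coe_lt_top _).not_ge hpv
  have hp_nebot : econj g p ≠ ⊥ := by
    intro h
    have h1 := hle_conj p
    rw [h] at h1
    exact (EReal.bot_lt_coe _).not_ge h1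
  set gp : ℝ := (econj g p).toReal with hgpdef
  have hgp : (gp : EReal) = econj g p := EReal.coe_toReal hp_netop hp_nebot
  have hFeq := le_antisymm hpv hvp
  rw [← hgp, hconjv, ← EReal.coe_add, ← EReal.coe_add] at hFeq
  have hFeqR : gp + 1 / 2 * ((p - x) ⬝ᵥ L *ᵥ (p - x))
      = v ⬝ᵥ q - gq + 1 / 2 * ((v - x) ⬝ᵥ L *ᵥ (v - x)) := by
    exact_mod_cast hFeq
  -- midpoint argument
  set m : Fin n → ℝ := (1/2 : ℝ) • p + (1/2 : ℝ) • v with hm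
  have hconjm : econj g m ≤ ((gp / 2 + (v ⬝ᵥ q - gq) / 2 : ℝ) : EReal) := by
    refine iSup_le fun w => ?_
    rcases eq_or_ne (g w) ⊤ with hw | hw
    · rw [hw, EReal.sub_top]; exact bot_le
    · have hgw : ((g w).toReal : EReal) = g w := EReal.coe_toReal hw (hproper_bot w)
      set gw : ℝ := (g w).toReal with hgwdef
      have h1 : p ⬝ᵥ w - gw ≤ gp := by
        have h := le_iSup (fun u => ((p ⬝ᵥ u : ℝ) : EReal) - g u) w
        rw [← hgw, ← EReal.coe_sub] at h
        have h' : ((p ⬝ᵥ w - gw : ℝ) : EReal) ≤ ((gp : ℝ) : EReal) := by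
          rw [hgp]; exact h
        exact EReal.coe_le_coe_iff.1 h'
      have h2 : v ⬝ᵥ w - gw ≤ v ⬝ᵥ q - gq := by
        have h := hsubR w hw
        have hd : v ⬝ᵥ (w - q) = v ⬝ᵥ w - v ⬝ᵥ q := dotProduct_sub _ _ _
        rw [← hgwdef] at h
        linarith
      have h3 : m ⬝ᵥ w = (1/2) * (p ⬝ᵥ w) + (1/2) * (v ⬝ᵥ w) := by
        rw [hm, add_dotProduct, smul_dotProduct, smul_dotProduct,
          smul_eq_mul, smul_eq_mul]
      rw [← hgw, ← EReal.coe_sub, EReal.coe_le_coe_iff]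
      linarith
  have hpm := hp m
  have h4 : econj g m + (((1 / 2) * ((m - x) ⬝ᵥ L *ᵥ (m - x)) : ℝ) : EReal)
      ≤ ((gp / 2 + (v ⬝ᵥ q - gq) / 2 + (1 / 2) * ((m - x) ⬝ᵥ L *ᵥ (m - x)) : ℝ) : EReal) := by
    rw [EReal.coe_add]
    exact add_le_add_left hconjm _
  have h5 := le_trans hpm h4
  rw [← hgp, ← EReal.coe_add] at h5
  have h6 : gp + 1 / 2 * ((p - x) ⬝ᵥ L *ᵥ (p - x))
      ≤ gp / 2 + (v ⬝ᵥ q - gq) / 2 + 1 / 2 * ((m - x) ⬝ᵥ L *ᵥ (m - x)) :=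
    EReal.coe_le_coe_iff.1 h5
  have hmx : m - x = (1/2 : ℝ) • (p - x) + (1/2 : ℝ) • (v - x) := by rw [hm]; module
  have hcm : (m - x) ⬝ᵥ L *ᵥ (m - x)
      = (1/2) * ((p - x) ⬝ᵥ L *ᵥ (p - x)) + (1/2) * ((v - x) ⬝ᵥ L *ᵥ (v - x))
        - (1/4) * ((p - v) ⬝ᵥ L *ᵥ (p - v)) := by
    rw [hmx, quad_par L hLs (p - x) (v - x)]
    congr 2 <;> rw [show p - x - (v - x) = p - v by module]
  have hDle : (p - v) ⬝ᵥ L *ᵥ (p - v) ≤ 0 := by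
    rw [hcm] at h6; linarith
  have hpv0 : p - v = 0 := by
    by_contra hne
    have := hL.dotProduct_mulVec_pos hne
    simp only [star_trivial] at this
    have h0 : (0 : ℝ) < (p - v) ⬝ᵥ L *ᵥ (p - v) := by exact_mod_cast this
    linarith
  have hpveq : p = v := sub_eq_zero.1 hpv0
  rw [hpveq, hv]
  exact sub_add_cancel x (M *ᵥ q)
end

section
/- Let f : ℝ^n → ℝ be differentiable and strongly convex with matrix H ∈ S₊₊ⁿ, h proper closed convex, C ∈ ℝ^{q×n}. Then the map ν ↦ x*(ν) = argmin_x { f(x) + h(x) + νᵀCx } is Lipschitz continuous from (ℝ^q, ‖·‖₂) to (ℝ^n, ‖·‖₂) with constant ‖C‖₂ / λ_min(H). -/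
open Matrix

/-- Cauchy–Schwarz for `dotProduct`. -/
lemma dot_le_sqrt_mul_sqrt {m : ℕ} (u w : Fin m → ℝ) :
    u ⬝ᵥ w ≤ Real.sqrt (u ⬝ᵥ u) * Real.sqrt (w ⬝ᵥ w) := by
  have := Real.sum_mul_le_sqrt_mul_sqrt Finset.univ u w
  simpa [dotProduct, sq] using this

lemma dot_self_nonneg {m : ℕ} (u : Fin m → ℝ) : 0 ≤ u ⬝ᵥ u :=
  Finset.sum_nonneg fun i _ => mul_self_nonneg (u i)

/-- The map `ν ↦ x*(ν) = argmin_x { f(x) + h(x) + νᵀCx }` is Lipschitz (in Euclidean norms)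
with constant `‖C‖₂ / λ_min(H)`, for `f` differentiable and strongly convex with matrix
`H ≻ 0` and `h` proper closed convex. The spectral norm `‖C‖₂ = sC` is characterized as the
least operator bound, and `λ_min(H) = lam` as the greatest lower Rayleigh-quotient bound. -/
theorem minimizer_map_lipschitz {n q : ℕ} (f : (Fin n → ℝ) → ℝ)
    (f' : (Fin n → ℝ) → (Fin n → ℝ))
    (H : Matrix (Fin n) (Fin n) ℝ) (hH : H.PosDef)
    (hdiff : ∀ x, HasFDerivAt f (dotCLM (f' x)) x)
    (hstrong : ∀ x y, f y + f' y ⬝ᵥ (x - y)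
        + (1 / 2) * ((x - y) ⬝ᵥ H.mulVec (x - y)) ≤ f x)
    (h : (Fin n → ℝ) → EReal)
    (hproper_bot : ∀ x, h x ≠ ⊥) (hproper_top : ∃ x, h x ≠ ⊤)
    (hclosed : LowerSemicontinuous h)
    (hhconv : ∀ (x y : Fin n → ℝ) (θ : ℝ), 0 ≤ θ → θ ≤ 1 →
      h (θ • x + (1 - θ) • y) ≤ (θ : EReal) * h x + ((1 - θ : ℝ) : EReal) * h y)
    (C : Matrix (Fin q) (Fin n) ℝ)
    (xs : (Fin q → ℝ) → (Fin n → ℝ))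
    (hxs : ∀ ν x, ((f (xs ν) + ν ⬝ᵥ C.mulVec (xs ν) : ℝ) : EReal) + h (xs ν)
        ≤ ((f x + ν ⬝ᵥ C.mulVec x : ℝ) : EReal) + h x)
    (sC : ℝ)
    (hsC : IsLeast {t : ℝ | 0 ≤ t ∧ ∀ v : Fin n → ℝ,
        Real.sqrt (C.mulVec v ⬝ᵥ C.mulVec v) ≤ t * Real.sqrt (v ⬝ᵥ v)} sC)
    (lam : ℝ) (hlam : 0 < lam)
    (hlamG : IsGreatest {t : ℝ | ∀ v : Fin n → ℝ, t * (v ⬝ᵥ v) ≤ v ⬝ᵥ H.mulVec v} lam) :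
    ∀ ν₁ ν₂, Real.sqrt ((xs ν₁ - xs ν₂) ⬝ᵥ (xs ν₁ - xs ν₂))
      ≤ (sC / lam) * Real.sqrt ((ν₁ - ν₂) ⬝ᵥ (ν₁ - ν₂)) := by
  -- h is finite at every minimizer
  obtain ⟨x₀, hx₀⟩ := hproper_top
  have hfin : ∀ ν : Fin q → ℝ, ∃ r : ℝ, h (xs ν) = (r : EReal) := by
    intro ν
    have hne : h (xs ν) ≠ ⊤ := by
      intro htop
      have := hxs ν x₀
      rw [htop] at this
      have hT : ((f (xs ν) + ν ⬝ᵥ C.mulVec (xs ν) : ℝ) : EReal) + ⊤ = ⊤ :=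
        EReal.add_top_of_ne_bot (by exact EReal.coe_ne_bot _)
      rw [hT, top_le_iff] at this
      exact absurd this (EReal.add_lt_top (EReal.coe_ne_top _) hx₀).ne
    lift h (xs ν) to ℝ using ⟨hne, hproper_bot _⟩ with r hr
    exact ⟨r, rfl⟩
  -- key estimate: value gap at the minimizer beats half the H-quadratic
  have key : ∀ (ν : Fin q → ℝ) (y : Fin n → ℝ) (r s : ℝ),
      h (xs ν) = (r : EReal) → h y = (s : EReal) →
      f (xs ν) + ν ⬝ᵥ C.mulVec (xs ν) + r
        + (1/2) * ((y - xs ν) ⬝ᵥ H.mulVec (y - xs ν))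
        ≤ f y + ν ⬝ᵥ C.mulVec y + s := by
    intro ν y r s hr hs
    set x := xs ν with hx
    set d := y - x with hd
    have hQnn : 0 ≤ d ⬝ᵥ H.mulVec d :=
      (mul_nonneg hlam.le (dot_self_nonneg d)).trans (hlamG.1 d)
    have step : ∀ θ : ℝ, 0 < θ → θ ≤ 1 →
        f x + ν ⬝ᵥ C.mulVec x + r + (1/2) * ((1 - θ) * (d ⬝ᵥ H.mulVec d))
          ≤ f y + ν ⬝ᵥ C.mulVec y + s := by
      intro θ hθ hθ1
      set z := x + θ • d with hz
      have hzeq : z = θ • y + (1 - θ) • x := by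
        funext i
        simp only [hz, hd, Pi.add_apply, Pi.smul_apply, Pi.sub_apply, smul_eq_mul]
        ring
      have hconv : h z ≤ ((θ * s + (1 - θ) * r : ℝ) : EReal) := by
        rw [hzeq]
        calc h (θ • y + (1 - θ) • x) ≤ (θ : EReal) * h y + ((1 - θ : ℝ) : EReal) * h x :=
              hhconv y x θ hθ.le hθ1
          _ = ((θ * s + (1 - θ) * r : ℝ) : EReal) := by
              rw [hr, hs, ← EReal.coe_mul, ← EReal.coe_mul, ← EReal.coe_add]
      have hmin := hxs ν z
      rw [hr] at hmin
      have hreal : f x + ν ⬝ᵥ C.mulVec x + r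
          ≤ f z + ν ⬝ᵥ C.mulVec z + (θ * s + (1 - θ) * r) := by
        have h2 : ((f x + ν ⬝ᵥ C.mulVec x : ℝ) : EReal) + (r : EReal)
            ≤ ((f z + ν ⬝ᵥ C.mulVec z : ℝ) : EReal) + ((θ * s + (1 - θ) * r : ℝ) : EReal) :=
          hmin.trans (add_le_add le_rfl hconv)
        rw [← EReal.coe_add, ← EReal.coe_add, EReal.coe_le_coe_iff] at h2
        linarith
      have h1 := hstrong y z
      have h2 := hstrong x z
      have hyz : y - z = (1 - θ) • d := by
        funext i
        simp only [hz, hd, Pi.add_apply, Pi.smul_apply, Pi.sub_apply, smul_eq_mul]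
        ring
      have hxz : x - z = (-θ) • d := by
        funext i
        simp only [hz, hd, Pi.add_apply, Pi.smul_apply, Pi.sub_apply, smul_eq_mul]
        ring
      rw [hyz, dotProduct_smul, smul_dotProduct, mulVec_smul, dotProduct_smul] at h1
      rw [hxz, dotProduct_smul, smul_dotProduct, mulVec_smul, dotProduct_smul] at h2
      simp only [smul_eq_mul] at h1 h2
      have hlin : ν ⬝ᵥ C.mulVec z
          = ν ⬝ᵥ C.mulVec x + θ * (ν ⬝ᵥ C.mulVec y - ν ⬝ᵥ C.mulVec x) := by
        rw [hz, mulVec_add, dotProduct_add, mulVec_smul, dotProduct_smul, hd, mulVec_sub,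
          dotProduct_sub]
        simp only [smul_eq_mul]
      rw [hlin] at hreal
      have hmul : θ * (f x + ν ⬝ᵥ C.mulVec x + r + (1/2) * ((1 - θ) * (d ⬝ᵥ H.mulVec d)))
          ≤ θ * (f y + ν ⬝ᵥ C.mulVec y + s) := by
        nlinarith [mul_le_mul_of_nonneg_left h1 hθ.le,
          mul_le_mul_of_nonneg_left h2 (by linarith : (0:ℝ) ≤ 1 - θ),
          mul_le_mul_of_nonneg_left hreal hθ.le]
      exact le_of_mul_le_mul_left hmul hθ
    refine le_of_forall_pos_le_add ?_
    intro ε hε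
    set Q := d ⬝ᵥ H.mulVec d with hQ
    have hQ1 : (0:ℝ) < Q + 1 := by linarith
    set θ := min 1 (ε / (Q + 1)) with hθdef
    have hθpos : 0 < θ := lt_min one_pos (div_pos hε hQ1)
    have hθ1 : θ ≤ 1 := min_le_left _ _
    have hθε : θ * (Q + 1) ≤ ε := by
      have h3 : θ ≤ ε / (Q + 1) := min_le_right _ _
      calc θ * (Q + 1) ≤ (ε / (Q + 1)) * (Q + 1) :=
            mul_le_mul_of_nonneg_right h3 hQ1.le
        _ = ε := div_mul_cancel₀ _ hQ1.ne'
    have := step θ hθpos hθ1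
    nlinarith [mul_nonneg hθpos.le hQnn]
  -- combine the two key inequalities
  intro ν₁ ν₂
  obtain ⟨r1, hr1⟩ := hfin ν₁
  obtain ⟨r2, hr2⟩ := hfin ν₂
  have K1 := key ν₁ (xs ν₂) r1 r2 hr1 hr2
  have K2 := key ν₂ (xs ν₁) r2 r1 hr2 hr1
  set x1 := xs ν₁ with hx1
  set x2 := xs ν₂ with hx2
  set d := x1 - x2 with hd
  have hneg : x2 - x1 = -d := by rw [hd]; abel
  have hsym : (x2 - x1) ⬝ᵥ H.mulVec (x2 - x1) = d ⬝ᵥ H.mulVec d := by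
    rw [hneg, neg_dotProduct, mulVec_neg, dotProduct_neg, neg_neg]
  rw [hsym] at K1
  have hQle : d ⬝ᵥ H.mulVec d ≤ (ν₁ - ν₂) ⬝ᵥ C.mulVec (x2 - x1) := by
    have hexp : (ν₁ - ν₂) ⬝ᵥ C.mulVec (x2 - x1)
        = ν₁ ⬝ᵥ C.mulVec x2 - ν₁ ⬝ᵥ C.mulVec x1 - ν₂ ⬝ᵥ C.mulVec x2 + ν₂ ⬝ᵥ C.mulVec x1 := by
      simp only [mulVec_sub, sub_dotProduct, dotProduct_sub]
      ring
    rw [hexp]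
    linarith
  have hCS := dot_le_sqrt_mul_sqrt (ν₁ - ν₂) (C.mulVec (x2 - x1))
  have hCb := hsC.1.2 (x2 - x1)
  have hsC0 : 0 ≤ sC := hsC.1.1
  have hdd : (x2 - x1) ⬝ᵥ (x2 - x1) = d ⬝ᵥ d := by
    rw [hneg, neg_dotProduct, dotProduct_neg, neg_neg]
  rw [hdd] at hCb
  set a := Real.sqrt (d ⬝ᵥ d) with hadef
  set b := Real.sqrt ((ν₁ - ν₂) ⬝ᵥ (ν₁ - ν₂)) with hbdef
  have ha2 : a * a = d ⬝ᵥ d := Real.mul_self_sqrt (dot_self_nonneg d)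
  have hb0 : 0 ≤ b := Real.sqrt_nonneg _
  have ha0 : 0 ≤ a := Real.sqrt_nonneg _
  have hchain : lam * (a * a) ≤ b * (sC * a) := by
    rw [ha2]
    refine ((hlamG.1 d).trans hQle).trans (hCS.trans ?_)
    exact mul_le_mul_of_nonneg_left hCb hb0
  show a ≤ sC / lam * b
  rcases ha0.lt_or_eq with hap | hz
  · have h4 : (lam * a) * a ≤ (sC * b) * a := by nlinarith
    have h5 : lam * a ≤ sC * b := le_of_mul_le_mul_right h4 hap
    rw [div_mul_eq_mul_div, le_div_iff₀ hlam]
    linarith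
  · rw [← hz]
    exact mul_nonneg (div_nonneg hsC0 hlam.le) hb0
end
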